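/- arXiv:1410.8096 — 5 statements merged into one kernel-verified Lean document; each statement's English description precedes it below -/
import Mathlib

section
/- Let φ : M → {normal subgroups of G} be a filter of the group G. Then the derived function ∂φ is again a filter of G: for every m ∈ M the subgroup ∂φ_m is normal in G, for all m, n ∈ M one has [∂φ_m, ∂φ_n] ≤ ∂φ_{m+n}, and m ≼ n implies ∂φ_n ≤ ∂φ_m. -/
open scoped commutatorElement

/-- Let `φ : M → {normal subgroups of G}` be a filter of the group `G`.
Then the derived function `∂φ`, `∂φ m = ⟨φ (m + s) : s ≠ 0⟩`, is again a filter of `G`: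
each `∂φ m` is normal in `G`, `[∂φ m, ∂φ n] ≤ ∂φ (m + n)` for all `m n`, and
`m ≼ n` implies `∂φ n ≤ ∂φ m`. -/
theorem derived_is_filter {G : Type*} [Group G] {M : Type*} [AddCommMonoid M] [Preorder M]
    (hcompat : ∀ k l m n : M, k ≤ l → m ≤ n → k + m ≤ l + n)
    (hself : ∀ m s : M, m ≤ m + s)
    (φ : M → Subgroup G)
    (hnormal : ∀ m, (φ m).Normal)
    (hfilter : ∀ m n, ⁅φ m, φ n⁆ ≤ φ (m + n))
    (hmono : ∀ m n, m ≤ n → φ n ≤ φ m)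
    (dφ : M → Subgroup G)
    (hdφ : ∀ m, dφ m = ⨆ s ∈ {s : M | s ≠ 0}, φ (m + s)) :
    (∀ m, (dφ m).Normal) ∧
    (∀ m n, ⁅dφ m, dφ n⁆ ≤ dφ (m + n)) ∧
    (∀ m n, m ≤ n → dφ n ≤ dφ m) := by
  -- rewrite the defining biSup as an iSup over a subtype
  have hd' : ∀ m, dφ m = ⨆ i : {s : M // s ≠ 0}, φ (m + i.1) := by
    intro m
    rw [hdφ m]
    exact (iSup_subtype'' {s : M | s ≠ 0} fun s => φ (m + s)).symm
  -- each φ (m + s) with s ≠ 0 is contained in dφ m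
  have hle : ∀ m (s : M), s ≠ 0 → φ (m + s) ≤ dφ m := by
    intro m s hs
    rw [hd' m]
    exact le_iSup (fun i : {s : M // s ≠ 0} => φ (m + i.1)) ⟨s, hs⟩
  -- normality
  have hN : ∀ m, (dφ m).Normal := by
    intro m
    constructor
    intro x hx g
    rw [hd' m] at hx
    refine Subgroup.iSup_induction _ (C := fun x => g * x * g⁻¹ ∈ dφ m) hx ?_ ?_ ?_
    · intro i x hxi
      exact hle m i.1 i.2 ((hnormal (m + i.1)).conj_mem x hxi g)
    · simpa using (dφ m).one_mem
    · intro x y hx hy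
      have : g * (x * y) * g⁻¹ = (g * x * g⁻¹) * (g * y * g⁻¹) := by group
      rw [this]
      exact (dφ m).mul_mem hx hy
  refine ⟨hN, ?_, ?_⟩
  · -- commutator condition
    intro m n
    rw [Subgroup.commutator_le]
    intro g₁ hg₁ g₂ hg₂
    rw [hd' m] at hg₁
    refine Subgroup.iSup_induction _
      (C := fun a => ∀ b ∈ dφ n, ⁅a, b⁆ ∈ dφ (m + n)) hg₁ ?_ ?_ ?_ g₂ hg₂
    · -- a ∈ φ (m + s) for some s ≠ 0
      intro i a ha b hb
      rw [hd' n] at hb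
      refine Subgroup.iSup_induction _ (C := fun b => ⁅a, b⁆ ∈ dφ (m + n)) hb ?_ ?_ ?_
      · intro j b hbj
        have h1 : ⁅a, b⁆ ∈ φ ((m + i.1) + (n + j.1)) :=
          hfilter (m + i.1) (n + j.1) (Subgroup.commutator_mem_commutator ha hbj)
        have h2 : φ ((m + i.1) + (n + j.1)) ≤ φ ((m + n) + i.1) := by
          apply hmono
          have := hself ((m + n) + i.1) j.1
          calc (m + n) + i.1 ≤ (m + n) + i.1 + j.1 := this
            _ = (m + i.1) + (n + j.1) := by abel_nf
        exact hle (m + n) i.1 i.2 (h2 h1)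
      · simpa using (dφ (m + n)).one_mem
      · intro x y hx hy
        have : ⁅a, x * y⁆ = ⁅a, x⁆ * (x * ⁅a, y⁆ * x⁻¹) := by group
        rw [this]
        exact (dφ (m + n)).mul_mem hx ((hN (m + n)).conj_mem _ hy x)
    · intro b _
      simpa using (dφ (m + n)).one_mem
    · intro x y hx hy b hb
      have : ⁅x * y, b⁆ = (x * ⁅y, b⁆ * x⁻¹) * ⁅x, b⁆ := by group
      rw [this]
      exact (dφ (m + n)).mul_mem ((hN (m + n)).conj_mem _ (hy b hb) x) (hx b hb)
  · -- monotonicity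
    intro m n hmn
    rw [hd' m, hd' n]
    refine iSup_le fun i => ?_
    refine le_trans ?_ (le_iSup (fun i : {s : M // s ≠ 0} => φ (m + i.1)) i)
    exact hmono _ _ (hcompat m n i.1 i.1 hmn le_rfl)
end

section
/- Let ∘ : V × V → W be an R-bilinear map. If (f, g) ∈ Adj(∘) and (h, ĥ) ∈ PIsom(∘), then the pair (h ∘ f ∘ h⁻¹, h ∘ g ∘ h⁻¹) (composition of linear maps, h⁻¹ the inverse automorphism of h) again lies in Adj(∘). Moreover, for each fixed (h, ĥ) ∈ PIsom(∘), the map (f, g) ↦ (h ∘ f ∘ h⁻¹, h ∘ g ∘ h⁻¹) is a ring automorphism of Adj(∘); thus PIsom(∘) acts on Adj(∘) by ring automorphisms. -/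
/-- Let `∘ : V × V → W` be an `R`-bilinear map, with adjoint ring
`Adj(∘) = {(f,g) : f u ∘ v = u ∘ g v}` (multiplication `(f,g)·(f',g') = (f ∘ f', g' ∘ g)`)
and pseudo-isometry group `PIsom(∘) = {(h,hW) : h u ∘ h v = hW (u ∘ v)}`.
If `(f,g) ∈ Adj(∘)` and `(h,hW) ∈ PIsom(∘)`, then `(h f h⁻¹, h g h⁻¹) ∈ Adj(∘)`; moreover,
for fixed `(h,hW)` the map `(f,g) ↦ (h f h⁻¹, h g h⁻¹)` is a ring automorphism of `Adj(∘)`: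
it is a bijection of `Adj(∘)` onto itself which preserves addition, the multiplicative
identity `(id, id)`, and the multiplication `(f,g)·(f',g') = (f ∘ f', g' ∘ g)`. -/
theorem pseudo_isometries_act_on_adjoint_ring {R : Type*} [CommRing R]
    {V W : Type*} [AddCommGroup V] [AddCommGroup W] [Module R V] [Module R W]
    (B : V →ₗ[R] V →ₗ[R] W)
    (Adj : Set ((V →ₗ[R] V) × (V →ₗ[R] V)))
    (hAdj : Adj = {fg | ∀ u v : V, B (fg.1 u) v = B u (fg.2 v)})
    (h : V ≃ₗ[R] V) (hW : W ≃ₗ[R] W)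
    (hPIsom : ∀ u v : V, B (h u) (h v) = hW (B u v))
    (C : (V →ₗ[R] V) × (V →ₗ[R] V) → (V →ₗ[R] V) × (V →ₗ[R] V))
    (hC : C = fun fg => (h.toLinearMap ∘ₗ fg.1 ∘ₗ h.symm.toLinearMap,
                         h.toLinearMap ∘ₗ fg.2 ∘ₗ h.symm.toLinearMap)) :
    (∀ fg ∈ Adj, C fg ∈ Adj) ∧
    Set.BijOn C Adj Adj ∧
    (∀ fg fg' : (V →ₗ[R] V) × (V →ₗ[R] V), C (fg + fg') = C fg + C fg') ∧
    C (LinearMap.id, LinearMap.id) = (LinearMap.id, LinearMap.id) ∧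
    (∀ fg fg' : (V →ₗ[R] V) × (V →ₗ[R] V),
      C (fg.1 ∘ₗ fg'.1, fg'.2 ∘ₗ fg.2) = ((C fg).1 ∘ₗ (C fg').1, (C fg').2 ∘ₗ (C fg).2)) := by
  subst hAdj hC
  have hP' : ∀ u v : V, B (h.symm u) (h.symm v) = hW.symm (B u v) := by
    intro u v
    apply hW.injective
    rw [← hPIsom, h.apply_symm_apply, h.apply_symm_apply, hW.apply_symm_apply]
  have maps : ∀ fg ∈ {fg : (V →ₗ[R] V) × (V →ₗ[R] V) |
      ∀ u v : V, B (fg.1 u) v = B u (fg.2 v)},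
      (h.toLinearMap ∘ₗ fg.1 ∘ₗ h.symm.toLinearMap,
       h.toLinearMap ∘ₗ fg.2 ∘ₗ h.symm.toLinearMap) ∈
      {fg : (V →ₗ[R] V) × (V →ₗ[R] V) | ∀ u v : V, B (fg.1 u) v = B u (fg.2 v)} := by
    rintro ⟨f, g⟩ hfg u v
    simp only [LinearMap.comp_apply, LinearEquiv.coe_coe]
    calc B (h (f (h.symm u))) v
        = B (h (f (h.symm u))) (h (h.symm v)) := by rw [h.apply_symm_apply]
      _ = hW (B (f (h.symm u)) (h.symm v)) := hPIsom _ _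
      _ = hW (B (h.symm u) (g (h.symm v))) := by rw [hfg]
      _ = B (h (h.symm u)) (h (g (h.symm v))) := (hPIsom _ _).symm
      _ = B u (h (g (h.symm v))) := by rw [h.apply_symm_apply]
  refine ⟨maps, ?_, ?_, ?_, ?_⟩
  · -- BijOn
    set D : (V →ₗ[R] V) × (V →ₗ[R] V) → (V →ₗ[R] V) × (V →ₗ[R] V) :=
      fun fg => (h.symm.toLinearMap ∘ₗ fg.1 ∘ₗ h.toLinearMap,
                 h.symm.toLinearMap ∘ₗ fg.2 ∘ₗ h.toLinearMap) with hD
    have mapsD : ∀ fg ∈ {fg : (V →ₗ[R] V) × (V →ₗ[R] V) |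
        ∀ u v : V, B (fg.1 u) v = B u (fg.2 v)}, D fg ∈
        {fg : (V →ₗ[R] V) × (V →ₗ[R] V) | ∀ u v : V, B (fg.1 u) v = B u (fg.2 v)} := by
      rintro ⟨f, g⟩ hfg u v
      simp only [hD, LinearMap.comp_apply, LinearEquiv.coe_coe]
      calc B (h.symm (f (h u))) v
          = B (h.symm (f (h u))) (h.symm (h v)) := by rw [h.symm_apply_apply]
        _ = hW.symm (B (f (h u)) (h v)) := hP' _ _
        _ = hW.symm (B (h u) (g (h v))) := by rw [hfg]
        _ = B (h.symm (h u)) (h.symm (g (h v))) := (hP' _ _).symm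
        _ = B u (h.symm (g (h v))) := by rw [h.symm_apply_apply]
    have hDC : ∀ fg, D ((fun fg => (h.toLinearMap ∘ₗ fg.1 ∘ₗ h.symm.toLinearMap,
        h.toLinearMap ∘ₗ fg.2 ∘ₗ h.symm.toLinearMap)) fg) = fg := by
      rintro ⟨f, g⟩
      simp only [hD]
      ext v <;> simp
    have hCD : ∀ fg, (fun fg => (h.toLinearMap ∘ₗ fg.1 ∘ₗ h.symm.toLinearMap,
        h.toLinearMap ∘ₗ fg.2 ∘ₗ h.symm.toLinearMap)) (D fg) = fg := by
      rintro ⟨f, g⟩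
      simp only [hD]
      ext v <;> simp
    refine ⟨maps, ?_, ?_⟩
    · intro a _ b _ hab
      rw [← hDC a, hab, hDC b]
    · intro y hy
      exact ⟨D y, mapsD y hy, hCD y⟩
  · rintro ⟨f, g⟩ ⟨f', g'⟩
    ext v <;> simp
  · ext v <;> simp
  · rintro ⟨f, g⟩ ⟨f', g'⟩
    ext v <;> simp
end

section
/- Let p be a prime, n ≥ 2, and let U be the group of upper unitriangular n × n matrices over Z/pZ (upper triangular matrices with all diagonal entries equal to 1). For every m ≥ 1, the m-th term of the lower central series of U is γ_m(U) = {A ∈ U : A_{ij} = 0 for all indices i < j with j − i < m}. In particular γ_1(U) = U and γ_2(U) is the set of unitriangular matrices whose first superdiagonal vanishes. -/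
open Matrix
open scoped commutatorElement

/-- The group of upper unitriangular `n × n` matrices over `ℤ/pℤ`, as a subgroup of the
units of the matrix ring: upper triangular matrices all of whose diagonal entries are `1`. -/
def UT (p n : ℕ) [Fact p.Prime] : Subgroup (Matrix (Fin n) (Fin n) (ZMod p))ˣ where
  carrier := {A | (∀ i j : Fin n, j < i → (A : Matrix (Fin n) (Fin n) (ZMod p)) i j = 0) ∧
                  ∀ i : Fin n, (A : Matrix (Fin n) (Fin n) (ZMod p)) i i = 1}
  one_mem' := by
    refine ⟨fun i j hij => ?_, fun i => ?_⟩
    · simp [Matrix.one_apply, (ne_of_lt hij).symm]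
    · simp
  mul_mem' := by
    rintro A B ⟨hA0, hA1⟩ ⟨hB0, hB1⟩
    refine ⟨fun i j hij => ?_, fun i => ?_⟩
    · show (A.val * B.val) i j = 0
      rw [Matrix.mul_apply]
      refine Finset.sum_eq_zero fun k _ => ?_
      rcases lt_or_ge k i with h | h
      · rw [hA0 i k h, zero_mul]
      · rw [hB0 k j (lt_of_lt_of_le hij h), mul_zero]
    · show (A.val * B.val) i i = 1
      rw [Matrix.mul_apply, Finset.sum_eq_single i]
      · rw [hA1, hB1, one_mul]
      · intro k _ hk
        rcases lt_or_gt_of_ne hk with h | h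
        · rw [hA0 i k h, zero_mul]
        · rw [hB0 k i h, mul_zero]
      · exact fun h => absurd (Finset.mem_univ i) h
  inv_mem' := by
    rintro A ⟨hA0, hA1⟩
    have hBT : (A : Matrix (Fin n) (Fin n) (ZMod p)).BlockTriangular id :=
      fun i j hij => hA0 i j hij
    have hInv : Invertible (A : Matrix (Fin n) (Fin n) (ZMod p)) := A.invertible
    have hBTinv : ((A : Matrix (Fin n) (Fin n) (ZMod p))⁻¹).BlockTriangular id :=
      Matrix.blockTriangular_inv_of_blockTriangular hBT
    have hval : ((A⁻¹ : (Matrix (Fin n) (Fin n) (ZMod p))ˣ) : Matrix (Fin n) (Fin n) (ZMod p))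
        = (A : Matrix (Fin n) (Fin n) (ZMod p))⁻¹ := Matrix.coe_units_inv A
    refine ⟨fun i j hij => ?_, fun i => ?_⟩
    · rw [hval]; exact hBTinv (show (id j : Fin n) < id i from hij)
    · rw [hval]
      have hmul : (A : Matrix (Fin n) (Fin n) (ZMod p))⁻¹ * (A : Matrix (Fin n) (Fin n) (ZMod p)) = 1 :=
        Matrix.nonsing_inv_mul _ ((Matrix.isUnit_iff_isUnit_det _).mp A.isUnit)
      have := congrFun (congrFun hmul i) i
      rw [Matrix.mul_apply, Finset.sum_eq_single i] at this
      · rwa [hA1 i, mul_one, Matrix.one_apply_eq] at this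
      · intro k _ hk
        rcases lt_or_gt_of_ne hk with h | h
        · exact mul_eq_zero_of_left (hBTinv (show (id k : Fin n) < id i from h)) _
        · exact mul_eq_zero_of_right _ (hA0 k i h)
      · exact fun h => absurd (Finset.mem_univ i) h


abbrev Mat (p n : ℕ) := Matrix (Fin n) (Fin n) (ZMod p)

def NS (p n r : ℕ) : Set (Mat p n) := {X | ∀ i j : Fin n, (j:ℕ) < (i:ℕ) + r → X i j = 0}

lemma NS_mono {p n : ℕ} {r s : ℕ} (h : r ≤ s) : NS p n s ⊆ NS p n r :=
  fun _ hX i j hij => hX i j (lt_of_lt_of_le hij (by omega))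

lemma NS_zero_mem {p n r : ℕ} : (0 : Mat p n) ∈ NS p n r := fun _ _ _ => rfl

lemma NS_add {p n r : ℕ} {X Y : Mat p n} (hX : X ∈ NS p n r) (hY : Y ∈ NS p n r) :
    X + Y ∈ NS p n r := fun i j hij => by
  simp [Matrix.add_apply, hX i j hij, hY i j hij]

lemma NS_neg {p n r : ℕ} {X : Mat p n} (hX : X ∈ NS p n r) : -X ∈ NS p n r :=
  fun i j hij => by simp [Matrix.neg_apply, hX i j hij]

lemma NS_sub {p n r : ℕ} {X Y : Mat p n} (hX : X ∈ NS p n r) (hY : Y ∈ NS p n r) :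
    X - Y ∈ NS p n r := by
  rw [sub_eq_add_neg]; exact NS_add hX (NS_neg hY)

lemma NS_mul {p n r s : ℕ} {X Y : Mat p n} (hX : X ∈ NS p n r) (hY : Y ∈ NS p n s) :
    X * Y ∈ NS p n (r + s) := fun i j hij => by
  rw [Matrix.mul_apply]
  refine Finset.sum_eq_zero fun k _ => ?_
  rcases lt_or_ge (k:ℕ) ((i:ℕ) + r) with h | h
  · rw [hX i k h, zero_mul]
  · rw [hY k j (by omega), mul_zero]

section Aux
variable {p n : ℕ} [Fact p.Prime]

/-- The underlying matrix of an element of `UT p n`. -/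
def mval (a : ↥(UT p n)) : Mat p n := ((a : (Mat p n)ˣ) : Mat p n)

lemma mval_mul (a b : ↥(UT p n)) : mval (a * b) = mval a * mval b := rfl

lemma mval_one : mval (1 : ↥(UT p n)) = 1 := rfl

lemma mval_inv_mul (a : ↥(UT p n)) : mval a⁻¹ * mval a = 1 := by
  rw [← mval_mul, inv_mul_cancel, mval_one]

lemma mval_mul_inv (a : ↥(UT p n)) : mval a * mval a⁻¹ = 1 := by
  rw [← mval_mul, mul_inv_cancel, mval_one]

lemma UT_lower {x : (Mat p n)ˣ} (hx : x ∈ UT p n) : (x : Mat p n) ∈ NS p n 0 :=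
  fun i j hij => hx.1 i j (by omega)

lemma mval_lower (a : ↥(UT p n)) : mval a ∈ NS p n 0 := UT_lower a.2

lemma UT_sub_one (a : ↥(UT p n)) : mval a - 1 ∈ NS p n 1 := by
  intro i j hij
  rcases eq_or_lt_of_le (Nat.lt_succ_iff.mp hij) with h | h
  · have : j = i := Fin.ext h
    subst this
    simp [Matrix.sub_apply, mval, a.2.2 j]
  · simp [Matrix.sub_apply, mval, a.2.1 i j (by omega), Matrix.one_apply,
      (Fin.lt_def.mpr h).ne']

/-- The congruence subgroups `G_m`. -/
def Gsub (p n : ℕ) [Fact p.Prime] (m : ℕ) : Subgroup ↥(UT p n) where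
  carrier := {x | mval x - 1 ∈ NS p n m}
  one_mem' := by
    show mval (1 : ↥(UT p n)) - 1 ∈ NS p n m
    simpa [mval_one] using (NS_zero_mem : (0 : Mat p n) ∈ NS p n m)
  mul_mem' := by
    intro a b ha hb
    have key : mval (a * b) - 1 =
        (mval a - 1) * (mval b - 1) + (mval a - 1) + (mval b - 1) := by
      rw [mval_mul]; noncomm_ring
    show mval (a * b) - 1 ∈ NS p n m
    rw [key]
    exact NS_add (NS_add (NS_mono (by omega) (NS_mul ha hb)) ha) hb
  inv_mem' := by
    intro a ha
    have key : mval a⁻¹ - 1 = -(mval a⁻¹ * (mval a - 1)) := by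
      rw [mul_sub, mval_inv_mul]; noncomm_ring
    show mval a⁻¹ - 1 ∈ NS p n m
    rw [key]
    exact NS_neg (by simpa using NS_mul (mval_lower a⁻¹) ha)

lemma mem_Gsub {m : ℕ} {a : ↥(UT p n)} : a ∈ Gsub p n m ↔ mval a - 1 ∈ NS p n m := Iff.rfl

lemma Gsub_one_top : Gsub p n 1 = ⊤ := by
  ext x
  simp only [Subgroup.mem_top, iff_true]
  exact UT_sub_one x

/-- Commutators add levels. -/
lemma Gsub_commutator {r s : ℕ} {a b : ↥(UT p n)} (ha : a ∈ Gsub p n r) (hb : b ∈ Gsub p n s) :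
    ⁅a, b⁆ ∈ Gsub p n (r + s) := by
  rw [mem_Gsub] at ha hb ⊢
  have hBA : mval b * mval a * (mval a⁻¹ * mval b⁻¹) = 1 := by
    rw [mul_assoc (mval b), ← mul_assoc (mval a), mval_mul_inv, one_mul, mval_mul_inv]
  have key : mval ⁅a, b⁆ - 1 = (mval a * mval b - mval b * mval a) * (mval a⁻¹ * mval b⁻¹) := by
    rw [commutatorElement_def, mval_mul, mval_mul, mval_mul, sub_mul, hBA,
      mul_assoc, mul_assoc]
  have hab : mval a * mval b - mval b * mval a =
      (mval a - 1) * (mval b - 1) - (mval b - 1) * (mval a - 1) := by noncomm_ring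
  rw [key]
  have h1 : mval a * mval b - mval b * mval a ∈ NS p n (r + s) := by
    rw [hab]
    refine NS_sub (NS_mul ha hb) ?_
    rw [Nat.add_comm r s]
    exact NS_mul hb ha
  have h2 : mval a⁻¹ * mval b⁻¹ ∈ NS p n 0 := by
    simpa using NS_mul (mval_lower a⁻¹) (mval_lower b⁻¹)
  simpa using NS_mul h1 h2

/-- Forward inclusion: `γ_{k+1} ⊆ G_{k+1}`. -/
lemma lcs_le_Gsub (k : ℕ) : (⊤ : Subgroup ↥(UT p n)).lowerCentralSeries k ≤ Gsub p n (k + 1) := by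
  induction k with
  | zero => rw [show (⊤ : Subgroup ↥(UT p n)).lowerCentralSeries 0 = ⊤ from rfl, Gsub_one_top]
  | succ k ih =>
    rw [lowerCentralSeries_succ]
    refine (Subgroup.closure_le (Gsub p n (k + 1 + 1))).mpr ?_
    rintro x ⟨g, hg, h, -, rfl⟩
    show ⁅g, h⁆ ∈ Gsub p n (k + 1 + 1)
    have hh : h ∈ Gsub p n 1 := UT_sub_one h
    exact Gsub_commutator (ih hg) hh

end Aux

section Transvections
variable {p n : ℕ} [Fact p.Prime]

lemma transvection_mul_neg (i j : Fin n) (hij : i ≠ j) (c : ZMod p) :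
    Matrix.transvection i j c * Matrix.transvection i j (-c) = 1 := by
  have hEE : Matrix.single i j c * Matrix.single i j (-c) = 0 :=
    Matrix.single_mul_single_of_ne c i j i (Ne.symm hij) (-c)
  have e : ∀ X Y : Mat p n, (1 + X) * (1 + Y) = 1 + (X + Y) + X * Y := by
    intros; noncomm_ring
  rw [Matrix.transvection, Matrix.transvection, e, hEE, add_zero,
    ← Matrix.single_add, add_neg_cancel, Matrix.single_zero, add_zero]

/-- A transvection as a unit of the matrix ring. -/
def Tunit (i j : Fin n) (hij : i ≠ j) (c : ZMod p) : (Mat p n)ˣ where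
  val := Matrix.transvection i j c
  inv := Matrix.transvection i j (-c)
  val_inv := transvection_mul_neg i j hij c
  inv_val := by
    have := transvection_mul_neg i j hij (-c)
    rwa [neg_neg] at this

lemma Tunit_mem_UT {i j : Fin n} (hij : i < j) (c : ZMod p) : Tunit i j hij.ne c ∈ UT p n := by
  constructor
  · intro a b hba
    show Matrix.transvection i j c a b = 0
    rw [Matrix.transvection, Matrix.add_apply, Matrix.one_apply_ne hba.ne']
    rw [Matrix.single_apply_of_ne]
    · exact add_zero 0
    rintro ⟨rfl, rfl⟩
    exact absurd hij (not_lt_of_gt hba)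
  · intro a
    show Matrix.transvection i j c a a = 1
    rw [Matrix.transvection, Matrix.add_apply, Matrix.one_apply_eq]
    rw [Matrix.single_apply_of_ne]
    · exact add_zero 1
    rintro ⟨rfl, rfl⟩
    exact absurd hij (lt_irrefl _)

/-- A transvection above the diagonal as an element of `UT p n`. -/
def Tu (i j : Fin n) (hij : i < j) (c : ZMod p) : ↥(UT p n) :=
  ⟨Tunit i j hij.ne c, Tunit_mem_UT hij c⟩

lemma mval_Tu (i j : Fin n) (hij : i < j) (c : ZMod p) :
    mval (Tu i j hij c) = 1 + Matrix.single i j c := rfl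

lemma Tu_mem_Gsub {m : ℕ} {i j : Fin n} (hij : i < j) (c : ZMod p)
    (hm : (i : ℕ) + m ≤ (j : ℕ)) : Tu i j hij c ∈ Gsub p n m := by
  rw [mem_Gsub, mval_Tu]
  have h1 : (1 : Mat p n) + Matrix.single i j c - 1 = Matrix.single i j c := by
    abel
  rw [h1]
  intro a b hab
  refine Matrix.single_apply_of_ne _ _ _ _ _ ?_
  rintro ⟨rfl, rfl⟩
  omega

lemma mval_injective : Function.Injective (mval (p := p) (n := n)) := by
  intro a b h
  exact Subtype.ext (Units.ext h)

/-- The key commutator identity for transvections. -/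
lemma Tu_commutator {i k j : Fin n} (hik : i < k) (hkj : k < j) (c d : ZMod p) :
    ⁅Tu i k hik c, Tu k j hkj d⁆ = Tu i j (hik.trans hkj) (c * d) := by
  set A : Mat p n := Matrix.single i k c with hA
  set B : Mat p n := Matrix.single k j d with hB
  have hBA : B * A = 0 := Matrix.single_mul_single_of_ne d k j i (hik.trans hkj).ne' c
  have hAB : A * B = Matrix.single i j (c * d) :=
    Matrix.single_mul_single_same c i k j d
  have hABA : A * B * A = 0 := by
    rw [hAB]
    exact Matrix.single_mul_single_of_ne (c * d) i j i (hik.trans hkj).ne' c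
  have hABB : A * B * B = 0 := by
    rw [hAB]
    exact Matrix.single_mul_single_of_ne (c * d) i j k hkj.ne' d
  -- `xy = z (yx)` at the matrix level
  have key : mval (Tu i k hik c * Tu k j hkj d) =
      mval (Tu i j (hik.trans hkj) (c * d) * (Tu k j hkj d * Tu i k hik c)) := by
    simp only [mval_mul, mval_Tu]
    rw [← hA, ← hB]
    have e1 : ((1 : Mat p n) + Matrix.single i j (c * d)) * ((1 + B) * (1 + A)) =
        1 + A + B + B * A + A * B + A * B * A + A * B * B + A * B * (B * A) := by
      rw [← hAB]
      noncomm_ring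
    have e2 : ((1 : Mat p n) + A) * (1 + B) = 1 + A + B + A * B := by noncomm_ring
    rw [e1, e2, hBA, hABA, hABB, mul_zero]
    abel
  have key2 : Tu i k hik c * Tu k j hkj d =
      Tu i j (hik.trans hkj) (c * d) * (Tu k j hkj d * Tu i k hik c) := mval_injective key
  rw [commutatorElement_def]
  calc Tu i k hik c * Tu k j hkj d * (Tu i k hik c)⁻¹ * (Tu k j hkj d)⁻¹
      = Tu i k hik c * Tu k j hkj d * ((Tu k j hkj d * Tu i k hik c))⁻¹ := by
        rw [_root_.mul_inv_rev, mul_assoc]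
    _ = Tu i j (hik.trans hkj) (c * d) := by rw [key2, mul_assoc, mul_inv_cancel, mul_one]

end Transvections

section Reverse
variable {p n : ℕ} [Fact p.Prime]

lemma Gsub_entry {m : ℕ} {x : ↥(UT p n)} (hx : x ∈ Gsub p n m) {i j : Fin n}
    (h : (j : ℕ) < (i : ℕ) + m) : mval x i j = (1 : Mat p n) i j := by
  have h0 := hx i j h
  rw [Matrix.sub_apply, sub_eq_zero] at h0
  exact h0

lemma mval_Tu_mul (i j : Fin n) (hij : i < j) (c : ZMod p) (x : ↥(UT p n)) (a b : Fin n) :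
    mval (Tu i j hij c * x) a b =
      if a = i then mval x a b + c * mval x j b else mval x a b := by
  rw [mval_mul, mval_Tu, add_mul, one_mul, Matrix.add_apply]
  split_ifs with h
  · subst h
    rw [Matrix.single_mul_apply_same]
  · rw [Matrix.single_mul_apply_of_ne _ _ _ _ _ h, add_zero]

/-- A transvection at distance `≥ k+2` from the diagonal lies in `γ_{k+2}`, provided
`G_{k+1} ≤ γ_{k+1}` (in Mathlib's indexing: `Gsub (k+1) ≤ lcs k`). -/
lemma Tu_mem_lcs {k : ℕ} (IHk : Gsub p n (k + 1) ≤ (⊤ : Subgroup ↥(UT p n)).lowerCentralSeries k)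
    {i j : Fin n} (hij : i < j) (c : ZMod p) (hd : (i : ℕ) + k + 2 ≤ (j : ℕ)) :
    Tu i j hij c ∈ (⊤ : Subgroup ↥(UT p n)).lowerCentralSeries (k + 1) := by
  have hjn : ((j : ℕ) - 1) < n := by omega
  set mid : Fin n := ⟨(j : ℕ) - 1, hjn⟩ with hmid
  have h1 : i < mid := by rw [Fin.lt_def]; simp only [hmid]; omega
  have h2 : mid < j := by rw [Fin.lt_def]; simp only [hmid]; omega
  have hcomm : ⁅Tu i mid h1 c, Tu mid j h2 1⁆ = Tu i j hij c := by
    rw [Tu_commutator h1 h2 c 1, mul_one]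
  have hmem1 : Tu i mid h1 c ∈ Gsub p n (k + 1) :=
    Tu_mem_Gsub h1 c (by simp only [hmid]; omega)
  rw [← hcomm, lowerCentralSeries_succ]
  refine Subgroup.subset_closure ?_
  exact ⟨Tu i mid h1 c, IHk hmem1, Tu mid j h2 1, Subgroup.mem_top _,
    (commutatorElement_def _ _).symm⟩

/-- Row-clearing induction: if all rows of index `≥ t` of `x - 1` vanish up to distance `r`
(inclusive), and `x ∈ Gsub r`, then `x ∈ γ_{k+2}`. -/
lemma clear_rows {k r : ℕ} (hr : k + 2 ≤ r)
    (IHr : Gsub p n (r + 1) ≤ (⊤ : Subgroup ↥(UT p n)).lowerCentralSeries (k + 1))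
    (IHk : Gsub p n (k + 1) ≤ (⊤ : Subgroup ↥(UT p n)).lowerCentralSeries k) :
    ∀ t : ℕ, ∀ x : ↥(UT p n), x ∈ Gsub p n r →
      (∀ i j : Fin n, (j : ℕ) < (i : ℕ) + r + 1 → t ≤ (i : ℕ) →
        mval x i j = (1 : Mat p n) i j) →
      x ∈ (⊤ : Subgroup ↥(UT p n)).lowerCentralSeries (k + 1) := by
  intro t
  induction t with
  | zero =>
    intro x hx hrow
    refine IHr ?_
    intro i j hij
    rw [Matrix.sub_apply, sub_eq_zero]
    exact hrow i j (by omega) (Nat.zero_le _)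
  | succ t ih =>
    intro x hx hrow
    by_cases htn : t < n
    · by_cases htr : t + r < n
      · -- clear the entry at position (t, t + r)
        set ti : Fin n := ⟨t, htn⟩ with hti
        set tj : Fin n := ⟨t + r, htr⟩ with htj
        have htitj : ti < tj := by rw [Fin.lt_def]; simp only [hti, htj]; omega
        set c : ZMod p := mval x ti tj with hc
        set y : ↥(UT p n) := Tu ti tj htitj (-c) * x with hy
        have hyG : y ∈ Gsub p n r :=
          (Gsub p n r).mul_mem (Tu_mem_Gsub htitj (-c) (by simp [hti, htj])) hx
        have hyrow : ∀ i j : Fin n, (j : ℕ) < (i : ℕ) + r + 1 → t ≤ (i : ℕ) →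
            mval y i j = (1 : Mat p n) i j := by
          intro i j hij hti'
          rw [hy, mval_Tu_mul]
          split_ifs with hieq
          · have hit : (i : ℕ) = t := by rw [hieq]
            rcases Nat.lt_or_ge (j : ℕ) ((i : ℕ) + r) with hj | hj
            · have hx1 : mval x i j = (1 : Mat p n) i j := Gsub_entry hx hj
              have hx2 : mval x tj j = 0 := by
                have h2 : mval x tj j = (1 : Mat p n) tj j :=
                  Gsub_entry hx (by show (j : ℕ) < t + r + r; omega)
                rw [h2, Matrix.one_apply_ne]
                rw [Fin.ne_iff_vne]
                show t + r ≠ (j : ℕ)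
                omega
              rw [hx1, hx2, mul_zero, add_zero]
            · have hjeq : j = tj := by
                rw [Fin.ext_iff]
                show (j : ℕ) = t + r
                omega
              have hdiag : mval x tj tj = 1 := by
                have h2 : mval x tj tj = (1 : Mat p n) tj tj :=
                  Gsub_entry hx (by show t + r < t + r + r; omega)
                rw [h2, Matrix.one_apply_eq]
              have hcc : mval x i tj = c := by rw [hieq, hc]
              have hne : i ≠ tj := by
                rw [Fin.ne_iff_vne]
                show (i : ℕ) ≠ t + r
                omega
              rw [hjeq, hdiag, mul_one, hcc, Matrix.one_apply_ne hne]
              ring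
          · refine hrow i j hij ?_
            have : (i : ℕ) ≠ t := by
              intro h
              exact hieq (by rw [Fin.ext_iff]; simp only [hti]; omega)
            omega
        have hymem := ih y hyG hyrow
        have hEmem : (Tu ti tj htitj (-c))⁻¹ ∈ (⊤ : Subgroup ↥(UT p n)).lowerCentralSeries (k + 1) := by
          refine Subgroup.inv_mem _ ?_
          refine Tu_mem_lcs IHk htitj (-c) ?_
          simp only [hti, htj]
          omega
        have : x = (Tu ti tj htitj (-c))⁻¹ * y := by rw [hy, ← mul_assoc, inv_mul_cancel, one_mul]
        rw [this]
        exact Subgroup.mul_mem _ hEmem hymem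
      · -- row t is automatically clear
        refine ih x hx ?_
        intro i j hij hti'
        rcases Nat.lt_or_ge (i : ℕ) (t + 1) with h | h
        · have hit : (i : ℕ) = t := by omega
          refine Gsub_entry hx ?_
          have := j.isLt
          omega
        · exact hrow i j hij h
    · -- t ≥ n : vacuous strengthening
      refine ih x hx ?_
      intro i j hij hti'
      exact absurd (lt_of_le_of_lt hti' i.isLt) (by omega)

/-- Reverse inclusion: `G_{k+1} ⊆ γ_{k+1}`. -/
lemma Gsub_le_lcs : ∀ k : ℕ, Gsub p n (k + 1) ≤ (⊤ : Subgroup ↥(UT p n)).lowerCentralSeries k := by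
  intro k
  induction k with
  | zero => exact le_top
  | succ k IHk =>
    have main : ∀ d r : ℕ, k + 2 ≤ r → n ≤ r + d →
        Gsub p n r ≤ (⊤ : Subgroup ↥(UT p n)).lowerCentralSeries (k + 1) := by
      intro d
      induction d with
      | zero =>
        intro r hr hn x hx
        have : x = 1 := by
          apply mval_injective
          rw [mval_one]
          ext i j
          have h0 := hx i j (by have := j.isLt; omega)
          rw [Matrix.sub_apply, sub_eq_zero] at h0
          exact h0
        rw [this]
        exact Subgroup.one_mem _
      | succ d ihd =>
        intro r hr hn
        rcases Nat.lt_or_ge (r + d) n with h | h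
        · intro x hx
          exact clear_rows hr (ihd (r + 1) (by omega) (by omega)) IHk n x hx
            (fun i j _ hti => absurd (lt_of_le_of_lt hti i.isLt) (by omega))
        · exact ihd r hr h
    exact main n (k + 2) le_rfl (by omega)

end Reverse


/-- Let `p` be a prime, `n ≥ 2`, and let `U = UT(n, ℤ/pℤ)` be the group
of upper unitriangular `n × n` matrices over `ℤ/pℤ`.  For every `m ≥ 1`, the `m`-th term
`γ_m(U)` of the lower central series of `U` (here `γ_m(U) = lowerCentralSeries U (m - 1)`,
since Mathlib's lower central series starts with `lowerCentralSeries U 0 = U`) consists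
exactly of those `A ∈ U` with `A i j = 0` for all indices `i < j` with `j − i < m`.
(In particular `γ₁(U) = U` and `γ₂(U)` is the set of unitriangular matrices whose first
superdiagonal vanishes.) -/
theorem lowerCentralSeries_unitriangular (p n : ℕ) [Fact p.Prime] (hn : 2 ≤ n) :
    ∀ m : ℕ, 1 ≤ m → ∀ A : ↥(UT p n),
      A ∈ (⊤ : Subgroup ↥(UT p n)).lowerCentralSeries (m - 1) ↔
        ∀ i j : Fin n, i < j → (j : ℕ) - (i : ℕ) < m →
          ((A : (Matrix (Fin n) (Fin n) (ZMod p))ˣ) : Matrix (Fin n) (Fin n) (ZMod p)) i j = 0 := by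
  intro m hm A
  have hm1 : m - 1 + 1 = m := by omega
  constructor
  · intro hA i j hij hji
    have h1 : A ∈ Gsub p n (m - 1 + 1) := lcs_le_Gsub (m - 1) hA
    rw [hm1] at h1
    have hij' : (i : ℕ) < (j : ℕ) := Fin.lt_def.mp hij
    have h2 : mval A i j = (1 : Mat p n) i j := Gsub_entry h1 (by omega)
    exact h2.trans (Matrix.one_apply_ne hij.ne)
  · intro h
    have hmem : A ∈ Gsub p n m := by
      rw [mem_Gsub]
      intro i j hji
      rw [Matrix.sub_apply, sub_eq_zero]
      rcases lt_trichotomy i j with hlt | heq | hgt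
      · have hij' : (i : ℕ) < (j : ℕ) := Fin.lt_def.mp hlt
        have h0 : mval A i j = 0 := h i j hlt (by omega)
        rw [h0, Matrix.one_apply_ne hlt.ne]
      · subst heq
        rw [Matrix.one_apply_eq]
        exact A.2.2 i
      · rw [Matrix.one_apply_ne hgt.ne']
        exact A.2.1 i j hgt
    refine Gsub_le_lcs (m - 1) ?_
    rw [hm1]
    exact hmem
end

section
/- Let p be a prime, d ≥ 3, and let B : Z_p^d × Z_p^d → Z_p^{d−1} be the bilinear map with B(u, v)_k = u_k v_{k+1} − u_{k+1} v_k. Then Adj(B) = {(D(w, x) + y·E_{21} + z·E_{d−1,d}, D(x, w) − y·E_{21} − z·E_{d−1,d}) : w, x, y, z ∈ Z_p}. In particular, Adj(B) is a 4-dimensional Z_p-vector space. -/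
open Matrix

section AdjAux
variable {p d : ℕ}


private lemma vecMul_std (u : Fin d → ZMod p) (a b m : Fin d) (c : ZMod p) :
    (u ᵥ* Matrix.single a b c) m = if b = m then u a * c else 0 := by
  classical
  simp only [vecMul, dotProduct, Matrix.single, of_apply]
  by_cases h : b = m
  · simp [h, mul_ite, Finset.sum_ite_eq]
  · simp [h]

private lemma vecMul_F (hd : 3 ≤ d) (w x y z : ZMod p) (u : Fin d → ZMod p) (m : Fin d) :
    (u ᵥ* (diagonal (fun i : Fin d => if (i : ℕ) % 2 = 0 then w else x)
      + y • Matrix.single (⟨1, by have _x : (0:ℕ) < 1 := Nat.one_pos; omega⟩ : Fin d) ⟨0, by have _x : (0:ℕ) < 1 := Nat.one_pos; omega⟩ 1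
      + z • Matrix.single (⟨d-2, by have _x : (0:ℕ) < 1 := Nat.one_pos; omega⟩ : Fin d) ⟨d-1, by have _x : (0:ℕ) < 1 := Nat.one_pos; omega⟩ 1)) m
    = u m * (if (m : ℕ) % 2 = 0 then w else x)
      + (if (m:ℕ) = 0 then u ⟨1, by have _x : (0:ℕ) < 1 := Nat.one_pos; omega⟩ * y else 0)
      + (if (m:ℕ) = d-1 then u ⟨d-2, by have _x : (0:ℕ) < 1 := Nat.one_pos; omega⟩ * z else 0) := by
  rw [Matrix.smul_single, Matrix.smul_single, smul_eq_mul, mul_one, smul_eq_mul, mul_one]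
  rw [show ∀ A B C : Matrix (Fin d) (Fin d) (ZMod p), u ᵥ* (A + B + C) = u ᵥ* A + (u ᵥ* B) + (u ᵥ* C) from fun A B C => by rw [vecMul_add, vecMul_add]]
  simp only [Pi.add_apply, vecMul_diagonal, vecMul_std]
  rcases m with ⟨m, hm⟩
  simp only [Fin.mk.injEq, Fin.val_mk]
  congr 1
  · congr 1
    by_cases h : (0:ℕ) = m <;> simp [h, eq_comm (a := m)]
  · by_cases h : d-1 = m <;> simp [h, eq_comm (a := m)]

private lemma vecMul_G (hd : 3 ≤ d) (w x y z : ZMod p) (u : Fin d → ZMod p) (m : Fin d) :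
    (u ᵥ* (diagonal (fun i : Fin d => if (i : ℕ) % 2 = 0 then x else w)
      - y • Matrix.single (⟨1, by have _x : (0:ℕ) < 1 := Nat.one_pos; omega⟩ : Fin d) ⟨0, by have _x : (0:ℕ) < 1 := Nat.one_pos; omega⟩ 1
      - z • Matrix.single (⟨d-2, by have _x : (0:ℕ) < 1 := Nat.one_pos; omega⟩ : Fin d) ⟨d-1, by have _x : (0:ℕ) < 1 := Nat.one_pos; omega⟩ 1)) m
    = u m * (if (m : ℕ) % 2 = 0 then x else w)
      - (if (m:ℕ) = 0 then u ⟨1, by have _x : (0:ℕ) < 1 := Nat.one_pos; omega⟩ * y else 0)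
      - (if (m:ℕ) = d-1 then u ⟨d-2, by have _x : (0:ℕ) < 1 := Nat.one_pos; omega⟩ * z else 0) := by
  rw [Matrix.smul_single, Matrix.smul_single, smul_eq_mul, mul_one, smul_eq_mul, mul_one]
  rw [show ∀ A B C : Matrix (Fin d) (Fin d) (ZMod p), u ᵥ* (A - B - C) = u ᵥ* A - (u ᵥ* B) - (u ᵥ* C) from fun A B C => by rw [vecMul_sub, vecMul_sub]]
  simp only [Pi.sub_apply, vecMul_diagonal, vecMul_std]
  rcases m with ⟨m, hm⟩
  simp only [Fin.mk.injEq, Fin.val_mk]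
  congr 1
  · congr 1
    by_cases h : (0:ℕ) = m <;> simp [h, eq_comm (a := m)]
  · by_cases h : d-1 = m <;> simp [h, eq_comm (a := m)]

private lemma backward_dir (hd : 3 ≤ d)
    (B : (Fin d → ZMod p) → (Fin d → ZMod p) → (Fin (d - 1) → ZMod p))
    (hB : ∀ u v : Fin d → ZMod p, ∀ k : Fin (d - 1),
      B u v k = u ⟨(k : ℕ), by have := k.isLt; clear hd; omega⟩ * v ⟨(k : ℕ) + 1, by have := k.isLt; clear hd; omega⟩
        - u ⟨(k : ℕ) + 1, by have := k.isLt; clear hd; omega⟩ * v ⟨(k : ℕ), by have := k.isLt; clear hd; omega⟩)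
    (w x y z : ZMod p) (u v : Fin d → ZMod p) :
    B (u ᵥ* (diagonal (fun i : Fin d => if (i : ℕ) % 2 = 0 then w else x)
      + y • Matrix.single (⟨1, by have _x : (0:ℕ) < 1 := Nat.one_pos; omega⟩ : Fin d) ⟨0, by have _x : (0:ℕ) < 1 := Nat.one_pos; omega⟩ 1
      + z • Matrix.single (⟨d-2, by have _x : (0:ℕ) < 1 := Nat.one_pos; omega⟩ : Fin d) ⟨d-1, by have _x : (0:ℕ) < 1 := Nat.one_pos; omega⟩ 1)) v
    = B u (v ᵥ* (diagonal (fun i : Fin d => if (i : ℕ) % 2 = 0 then x else w)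
      - y • Matrix.single (⟨1, by have _x : (0:ℕ) < 1 := Nat.one_pos; omega⟩ : Fin d) ⟨0, by have _x : (0:ℕ) < 1 := Nat.one_pos; omega⟩ 1
      - z • Matrix.single (⟨d-2, by have _x : (0:ℕ) < 1 := Nat.one_pos; omega⟩ : Fin d) ⟨d-1, by have _x : (0:ℕ) < 1 := Nat.one_pos; omega⟩ 1)) := by
  funext k
  have hk : (k:ℕ) < d - 1 := k.isLt
  rw [hB, hB]
  rw [vecMul_F hd, vecMul_F hd, vecMul_G hd, vecMul_G hd]
  simp only [Fin.val_mk]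
  have h1 : ¬((k:ℕ) = d-1) := by have _x : (0:ℕ) < 1 := Nat.one_pos; omega
  have h2 : ¬((k:ℕ)+1 = 0) := by have _x : (0:ℕ) < 1 := Nat.one_pos; omega
  simp only [if_neg h1, if_neg h2]
  rcases eq_or_ne ((k:ℕ)) 0 with h0 | h0
  · have h3 : ¬((k:ℕ)+1 = d-1) := by have _x : (0:ℕ) < 1 := Nat.one_pos; omega
    have h3' : ¬((1:ℕ) = d-1) := by have _x : (0:ℕ) < 1 := Nat.one_pos; omega
    simp [h0, h3, h3']
    ring
  · rcases eq_or_ne ((k:ℕ)+1) (d-1) with h4 | h4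
    · have h5 : (k:ℕ) = d-2 := by have _x : (0:ℕ) < 1 := Nat.one_pos; omega
      have h6 : d-2+1 = d-1 := by have _x : (0:ℕ) < 1 := Nat.one_pos; omega
      have h7 : ¬(d-2 = 0) := by have _x : (0:ℕ) < 1 := Nat.one_pos; omega
      by_cases hp : (d-2)%2 = 0
      · have hp' : ¬((d-1)%2 = 0) := by have _x : (0:ℕ) < 1 := Nat.one_pos; omega
        simp [h5, h6, h7, hp, hp']
        ring
      · have hp' : (d-1)%2 = 0 := by have _x : (0:ℕ) < 1 := Nat.one_pos; omega
        simp [h5, h6, h7, hp, hp']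
        ring
    · by_cases hp : ((k:ℕ))%2 = 0
      · have hp' : ¬(((k:ℕ)+1)%2 = 0) := by have _x : (0:ℕ) < 1 := Nat.one_pos; omega
        simp [h0, h4, hp, hp']
        ring
      · have hp' : (((k:ℕ)+1)%2 = 0) := by have _x : (0:ℕ) < 1 := Nat.one_pos; omega
        simp [h0, h4, hp, hp']
        ring


private def EE (p d : ℕ) (f g : Matrix (Fin d) (Fin d) (ZMod p)) : Prop :=
  ∀ (i j : Fin d) (k : ℕ) (hk : k + 1 < d),
    f i ⟨k, by have _x : (0:ℕ) < 1 := Nat.one_pos; omega⟩ * (if (⟨k+1, hk⟩ : Fin d) = j then 1 else 0)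
      - f i ⟨k+1, hk⟩ * (if (⟨k, by have _x : (0:ℕ) < 1 := Nat.one_pos; omega⟩ : Fin d) = j then 1 else 0)
    = (if (⟨k, by have _x : (0:ℕ) < 1 := Nat.one_pos; omega⟩ : Fin d) = i then 1 else 0) * g j ⟨k+1, hk⟩
      - (if (⟨k+1, hk⟩ : Fin d) = i then 1 else 0) * g j ⟨k, by have _x : (0:ℕ) < 1 := Nat.one_pos; omega⟩

private lemma EE.symm {f g : Matrix (Fin d) (Fin d) (ZMod p)} (h : EE p d f g) : EE p d g f :=
  fun i j k hk => by linear_combination h j i k hk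

private lemma EE.offdiag (hd : 3 ≤ d) {f g : Matrix (Fin d) (Fin d) (ZMod p)} (hE : EE p d f g)
    (i c : ℕ) (hi : i < d) (hc : c < d) (hne : i ≠ c)
    (h10 : ¬(i = 1 ∧ c = 0)) (hdd : ¬(i = d-2 ∧ c = d-1)) :
    f ⟨i, hi⟩ ⟨c, hc⟩ = 0 := by
  by_cases hA : c + 1 < d ∧ i ≠ c + 1
  · have h := hE ⟨i, hi⟩ ⟨c+1, hA.1⟩ c hA.1
    simp only [Fin.mk.injEq, eq_self_iff_true, if_true] at h
    rw [if_neg (by have _x : (0:ℕ) < 1 := Nat.one_pos; omega : ¬ c = c + 1), if_neg (by have _x : (0:ℕ) < 1 := Nat.one_pos; omega : ¬ c = i),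
      if_neg (by have _x : (0:ℕ) < 1 := Nat.one_pos; omega : ¬ c + 1 = i)] at h
    linear_combination h
  · by_cases hB : 1 ≤ c ∧ i ≠ c - 1
    · have h := hE ⟨i, hi⟩ ⟨c-1, by have _x : (0:ℕ) < 1 := Nat.one_pos; omega⟩ (c-1) (by have _x : (0:ℕ) < 1 := Nat.one_pos; omega)
      have e : c - 1 + 1 = c := by have _x : (0:ℕ) < 1 := Nat.one_pos; omega
      simp only [Fin.mk.injEq, e, eq_self_iff_true, if_true] at h
      rw [if_neg (by have _x : (0:ℕ) < 1 := Nat.one_pos; omega : ¬ c = c - 1), if_neg (by have _x : (0:ℕ) < 1 := Nat.one_pos; omega : ¬ c - 1 = i),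
        if_neg (by have _x : (0:ℕ) < 1 := Nat.one_pos; omega : ¬ c = i)] at h
      linear_combination -h
    · exfalso; omega

private lemma EE.sub (hd : 3 ≤ d) {f g : Matrix (Fin d) (Fin d) (ZMod p)} (hE : EE p d f g) :
    g ⟨1, by have _x : (0:ℕ) < 1 := Nat.one_pos; omega⟩ ⟨0, by have _x : (0:ℕ) < 1 := Nat.one_pos; omega⟩ = - f ⟨1, by have _x : (0:ℕ) < 1 := Nat.one_pos; omega⟩ ⟨0, by have _x : (0:ℕ) < 1 := Nat.one_pos; omega⟩ := by
  have h := hE ⟨1, by have _x : (0:ℕ) < 1 := Nat.one_pos; omega⟩ ⟨1, by have _x : (0:ℕ) < 1 := Nat.one_pos; omega⟩ 0 (by have _x : (0:ℕ) < 1 := Nat.one_pos; omega)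
  simp only [Fin.mk.injEq, Nat.zero_add, eq_self_iff_true, if_true] at h
  rw [if_neg (by have _x : (0:ℕ) < 1 := Nat.one_pos; omega : ¬ (0:ℕ) = 1)] at h
  linear_combination h

private lemma EE.sup (hd : 3 ≤ d) {f g : Matrix (Fin d) (Fin d) (ZMod p)} (hE : EE p d f g) :
    g ⟨d-2, by have _x : (0:ℕ) < 1 := Nat.one_pos; omega⟩ ⟨d-1, by have _x : (0:ℕ) < 1 := Nat.one_pos; omega⟩ = - f ⟨d-2, by have _x : (0:ℕ) < 1 := Nat.one_pos; omega⟩ ⟨d-1, by have _x : (0:ℕ) < 1 := Nat.one_pos; omega⟩ := by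
  have h := hE ⟨d-2, by have _x : (0:ℕ) < 1 := Nat.one_pos; omega⟩ ⟨d-2, by have _x : (0:ℕ) < 1 := Nat.one_pos; omega⟩ (d-2) (by have _x : (0:ℕ) < 1 := Nat.one_pos; omega)
  have e : d - 2 + 1 = d - 1 := by have _x : (0:ℕ) < 1 := Nat.one_pos; omega
  simp only [Fin.mk.injEq, e, eq_self_iff_true, if_true] at h
  rw [if_neg (by have _x : (0:ℕ) < 1 := Nat.one_pos; omega : ¬ d - 1 = d - 2)] at h
  linear_combination -h

private lemma EE.rec' (hd : 3 ≤ d) {f g : Matrix (Fin d) (Fin d) (ZMod p)} (hE : EE p d f g)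
    (k : ℕ) (hk : k + 1 < d) :
    f ⟨k, by have _x : (0:ℕ) < 1 := Nat.one_pos; omega⟩ ⟨k, by have _x : (0:ℕ) < 1 := Nat.one_pos; omega⟩ = g ⟨k+1, hk⟩ ⟨k+1, hk⟩ := by
  have h := hE ⟨k, by have _x : (0:ℕ) < 1 := Nat.one_pos; omega⟩ ⟨k+1, hk⟩ k hk
  simp only [Fin.mk.injEq, eq_self_iff_true, if_true] at h
  rw [if_neg (by have _x : (0:ℕ) < 1 := Nat.one_pos; omega : ¬ k = k + 1), if_neg (by have _x : (0:ℕ) < 1 := Nat.one_pos; omega : ¬ k + 1 = k)] at h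
  linear_combination h

private lemma EE.diag (hd : 3 ≤ d) {f g : Matrix (Fin d) (Fin d) (ZMod p)} (hE : EE p d f g) :
    ∀ m (hm : m < d),
      (f ⟨m, hm⟩ ⟨m, hm⟩
        = (if m % 2 = 0 then f ⟨0, by have _x : (0:ℕ) < 1 := Nat.one_pos; omega⟩ ⟨0, by have _x : (0:ℕ) < 1 := Nat.one_pos; omega⟩ else f ⟨1, by have _x : (0:ℕ) < 1 := Nat.one_pos; omega⟩ ⟨1, by have _x : (0:ℕ) < 1 := Nat.one_pos; omega⟩))
      ∧ (g ⟨m, hm⟩ ⟨m, hm⟩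
        = (if m % 2 = 0 then f ⟨1, by have _x : (0:ℕ) < 1 := Nat.one_pos; omega⟩ ⟨1, by have _x : (0:ℕ) < 1 := Nat.one_pos; omega⟩ else f ⟨0, by have _x : (0:ℕ) < 1 := Nat.one_pos; omega⟩ ⟨0, by have _x : (0:ℕ) < 1 := Nat.one_pos; omega⟩)) := by
  intro m
  induction m with
  | zero =>
    intro hm
    refine ⟨by simp, ?_⟩
    have h := hE.symm.rec' hd 0 (by have _x : (0:ℕ) < 1 := Nat.one_pos; omega)
    simpa using h
  | succ n ih =>
    intro hm
    obtain ⟨ih1, ih2⟩ := ih (by have _x : (0:ℕ) < 1 := Nat.one_pos; omega)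
    have hf := hE.rec' hd n (by have _x : (0:ℕ) < 1 := Nat.one_pos; omega)
    have hg := hE.symm.rec' hd n (by have _x : (0:ℕ) < 1 := Nat.one_pos; omega)
    by_cases hp : n % 2 = 0
    · have hp' : ¬ (n + 1) % 2 = 0 := by have _x : (0:ℕ) < 1 := Nat.one_pos; omega
      refine ⟨?_, ?_⟩
      · rw [← hg, ih2, if_pos hp, if_neg hp']
      · rw [← hf, ih1, if_pos hp, if_neg hp']
    · have hp' : (n + 1) % 2 = 0 := by have _x : (0:ℕ) < 1 := Nat.one_pos; omega
      refine ⟨?_, ?_⟩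
      · rw [← hg, ih2, if_neg hp, if_pos hp']
      · rw [← hf, ih1, if_neg hp, if_pos hp']


private lemma entryF (hd : 3 ≤ d) (w x y z : ZMod p) (i j : ℕ) (hi : i < d) (hj : j < d) :
    (diagonal (fun t : Fin d => if (t : ℕ) % 2 = 0 then w else x)
      + y • Matrix.single (⟨1, by have _x : (0:ℕ) < 1 := Nat.one_pos; omega⟩ : Fin d) ⟨0, by have _x : (0:ℕ) < 1 := Nat.one_pos; omega⟩ 1
      + z • Matrix.single (⟨d-2, by have _x : (0:ℕ) < 1 := Nat.one_pos; omega⟩ : Fin d) ⟨d-1, by have _x : (0:ℕ) < 1 := Nat.one_pos; omega⟩ 1 :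
        Matrix (Fin d) (Fin d) (ZMod p)) ⟨i, hi⟩ ⟨j, hj⟩
    = (if i = j then (if i % 2 = 0 then w else x) else 0)
      + (if 1 = i ∧ 0 = j then y else 0) + (if d - 2 = i ∧ d - 1 = j then z else 0) := by
  simp only [Matrix.add_apply, Matrix.smul_apply, Matrix.diagonal_apply, Matrix.single, of_apply,
    smul_eq_mul, mul_ite, mul_one, mul_zero, Fin.mk.injEq, Fin.val_mk]

private lemma entryG (hd : 3 ≤ d) (w x y z : ZMod p) (i j : ℕ) (hi : i < d) (hj : j < d) :
    (diagonal (fun t : Fin d => if (t : ℕ) % 2 = 0 then x else w)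
      - y • Matrix.single (⟨1, by have _x : (0:ℕ) < 1 := Nat.one_pos; omega⟩ : Fin d) ⟨0, by have _x : (0:ℕ) < 1 := Nat.one_pos; omega⟩ 1
      - z • Matrix.single (⟨d-2, by have _x : (0:ℕ) < 1 := Nat.one_pos; omega⟩ : Fin d) ⟨d-1, by have _x : (0:ℕ) < 1 := Nat.one_pos; omega⟩ 1 :
        Matrix (Fin d) (Fin d) (ZMod p)) ⟨i, hi⟩ ⟨j, hj⟩
    = (if i = j then (if i % 2 = 0 then x else w) else 0)
      - (if 1 = i ∧ 0 = j then y else 0) - (if d - 2 = i ∧ d - 1 = j then z else 0) := by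
  simp only [Matrix.sub_apply, Matrix.smul_apply, Matrix.diagonal_apply, Matrix.single, of_apply,
    smul_eq_mul, mul_ite, mul_one, mul_zero, Fin.mk.injEq, Fin.val_mk]

private lemma entryF_inj (hd : 3 ≤ d) {w x y z w' x' y' z' : ZMod p}
    (h : diagonal (fun t : Fin d => if (t : ℕ) % 2 = 0 then w else x)
      + y • Matrix.single (⟨1, by have _x : (0:ℕ) < 1 := Nat.one_pos; omega⟩ : Fin d) ⟨0, by have _x : (0:ℕ) < 1 := Nat.one_pos; omega⟩ 1
      + z • Matrix.single (⟨d-2, by have _x : (0:ℕ) < 1 := Nat.one_pos; omega⟩ : Fin d) ⟨d-1, by have _x : (0:ℕ) < 1 := Nat.one_pos; omega⟩ 1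
      = diagonal (fun t : Fin d => if (t : ℕ) % 2 = 0 then w' else x')
      + y' • Matrix.single (⟨1, by have _x : (0:ℕ) < 1 := Nat.one_pos; omega⟩ : Fin d) ⟨0, by have _x : (0:ℕ) < 1 := Nat.one_pos; omega⟩ 1
      + z' • Matrix.single (⟨d-2, by have _x : (0:ℕ) < 1 := Nat.one_pos; omega⟩ : Fin d) ⟨d-1, by have _x : (0:ℕ) < 1 := Nat.one_pos; omega⟩ 1) :
    w = w' ∧ x = x' ∧ y = y' ∧ z = z' := by
  have h00 := congrFun (congrFun h ⟨0, by have _x : (0:ℕ) < 1 := Nat.one_pos; omega⟩) ⟨0, by have _x : (0:ℕ) < 1 := Nat.one_pos; omega⟩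
  have h11 := congrFun (congrFun h ⟨1, by have _x : (0:ℕ) < 1 := Nat.one_pos; omega⟩) ⟨1, by have _x : (0:ℕ) < 1 := Nat.one_pos; omega⟩
  have h10 := congrFun (congrFun h ⟨1, by have _x : (0:ℕ) < 1 := Nat.one_pos; omega⟩) ⟨0, by have _x : (0:ℕ) < 1 := Nat.one_pos; omega⟩
  have hdd := congrFun (congrFun h ⟨d-2, by have _x : (0:ℕ) < 1 := Nat.one_pos; omega⟩) ⟨d-1, by have _x : (0:ℕ) < 1 := Nat.one_pos; omega⟩
  rw [entryF hd, entryF hd] at h00 h11 h10 hdd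
  rw [if_pos rfl, if_neg (by have _x : (0:ℕ) < 1 := Nat.one_pos; omega : ¬((1:ℕ) = 0 ∧ (0:ℕ) = 0)),
    if_neg (by have _x : (0:ℕ) < 1 := Nat.one_pos; omega : ¬(d - 2 = 0 ∧ d - 1 = 0))] at h00
  rw [if_pos rfl, if_neg (by have _x : (0:ℕ) < 1 := Nat.one_pos; omega : ¬((1:ℕ) = 1 ∧ (0:ℕ) = 1)),
    if_neg (by have _x : (0:ℕ) < 1 := Nat.one_pos; omega : ¬(d - 2 = 1 ∧ d - 1 = 1))] at h11
  rw [if_neg (by have _x : (0:ℕ) < 1 := Nat.one_pos; omega : ¬(1:ℕ) = 0), if_pos ⟨rfl, rfl⟩,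
    if_neg (by have _x : (0:ℕ) < 1 := Nat.one_pos; omega : ¬(d - 2 = 1 ∧ d - 1 = 0))] at h10
  rw [if_neg (by have _x : (0:ℕ) < 1 := Nat.one_pos; omega : ¬ d - 2 = d - 1), if_neg (by have _x : (0:ℕ) < 1 := Nat.one_pos; omega : ¬((1:ℕ) = d - 2 ∧ (0:ℕ) = d - 1)),
    if_pos ⟨rfl, rfl⟩] at hdd
  norm_num at h00 h11 h10 hdd
  rw [if_neg (by have _x : (0:ℕ) < 1 := Nat.one_pos; omega : ¬(d - 2 = 0 ∧ d - 1 = 0))] at h00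
  rw [if_neg (by have _x : (0:ℕ) < 1 := Nat.one_pos; omega : ¬(d - 2 = 1 ∧ d = 2))] at h11
  rw [if_neg (by have _x : (0:ℕ) < 1 := Nat.one_pos; omega : ¬(d - 2 = 1 ∧ d - 1 = 0))] at h10
  rw [if_neg (by have _x : (0:ℕ) < 1 := Nat.one_pos; omega : ¬ d - 2 = d - 1),
    if_neg (by have _x : (0:ℕ) < 1 := Nat.one_pos; omega : ¬((1:ℕ) = d - 2 ∧ (0:ℕ) = d - 1))] at hdd
  norm_num at h00 h11 h10 hdd
  exact ⟨h00, h11, h10, hdd⟩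

end AdjAux

/-- Let `p` be a prime, `d ≥ 3`, and let
`B : ℤₚᵈ × ℤₚᵈ → ℤₚ^{d−1}`, `B(u,v)_k = u_k v_{k+1} − u_{k+1} v_k` (indices `1`-based in
the paper, `0`-based here).  Matrices act on row vectors on the right, and `(f, g)` is an
adjoint pair when `B(u f, v) = B(u, v g)` for all `u, v`.  Then `Adj(B)` consists exactly
of the pairs `(D(w,x) + y·E_{21} + z·E_{d−1,d}, D(x,w) − y·E_{21} − z·E_{d−1,d})` with
`w, x, y, z ∈ ℤₚ`, where `D(w,x)` is the diagonal matrix with alternating diagonal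
`(w,x,w,x,…)` and `E_{ij}` is a matrix unit (here in `0`-based indexing `E_{21} = E 1 0`
and `E_{d−1,d} = E (d−2) (d−1)`).  In particular `Adj(B)` has exactly `p⁴` elements,
i.e. it is `4`-dimensional over `ℤₚ`. -/
theorem adjoint_ring_typeA (p d : ℕ) [Fact p.Prime] (hd : 3 ≤ d)
    (B : (Fin d → ZMod p) → (Fin d → ZMod p) → (Fin (d - 1) → ZMod p))
    (hB : ∀ u v : Fin d → ZMod p, ∀ k : Fin (d - 1),
      B u v k = u ⟨(k : ℕ), by have := k.isLt; omega⟩ * v ⟨(k : ℕ) + 1, by have := k.isLt; omega⟩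
        - u ⟨(k : ℕ) + 1, by have := k.isLt; omega⟩ * v ⟨(k : ℕ), by have := k.isLt; omega⟩) :
    {fg : Matrix (Fin d) (Fin d) (ZMod p) × Matrix (Fin d) (Fin d) (ZMod p) |
        ∀ u v : Fin d → ZMod p, B (u ᵥ* fg.1) v = B u (v ᵥ* fg.2)} =
      {fg | ∃ w x y z : ZMod p,
        fg.1 = Matrix.diagonal (fun i : Fin d => if (i : ℕ) % 2 = 0 then w else x)
          + y • Matrix.single ⟨1, by omega⟩ ⟨0, by omega⟩ 1
          + z • Matrix.single ⟨d - 2, by omega⟩ ⟨d - 1, by omega⟩ 1 ∧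
        fg.2 = Matrix.diagonal (fun i : Fin d => if (i : ℕ) % 2 = 0 then x else w)
          - y • Matrix.single ⟨1, by omega⟩ ⟨0, by omega⟩ 1
          - z • Matrix.single ⟨d - 2, by omega⟩ ⟨d - 1, by omega⟩ 1} ∧
    Nat.card {fg : Matrix (Fin d) (Fin d) (ZMod p) × Matrix (Fin d) (Fin d) (ZMod p) //
        ∀ u v : Fin d → ZMod p, B (u ᵥ* fg.1) v = B u (v ᵥ* fg.2)} = p ^ 4 := by
  have hset : {fg : Matrix (Fin d) (Fin d) (ZMod p) × Matrix (Fin d) (Fin d) (ZMod p) |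
        ∀ u v : Fin d → ZMod p, B (u ᵥ* fg.1) v = B u (v ᵥ* fg.2)} =
      {fg | ∃ w x y z : ZMod p,
        fg.1 = Matrix.diagonal (fun i : Fin d => if (i : ℕ) % 2 = 0 then w else x)
          + y • Matrix.single ⟨1, by omega⟩ ⟨0, by omega⟩ 1
          + z • Matrix.single ⟨d - 2, by omega⟩ ⟨d - 1, by omega⟩ 1 ∧
        fg.2 = Matrix.diagonal (fun i : Fin d => if (i : ℕ) % 2 = 0 then x else w)
          - y • Matrix.single ⟨1, by omega⟩ ⟨0, by omega⟩ 1
          - z • Matrix.single ⟨d - 2, by omega⟩ ⟨d - 1, by omega⟩ 1} := by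
    ext fg
    obtain ⟨f, g⟩ := fg
    simp only [Set.mem_setOf_eq]
    constructor
    · intro h
      have hE : EE p d f g := by
        intro i j k hk
        have h1 := congrFun (h (Pi.single i 1) (Pi.single j 1)) ⟨k, by omega⟩
        rw [hB, hB] at h1
        simpa [Pi.single_apply] using h1
      refine ⟨f ⟨0, by omega⟩ ⟨0, by omega⟩, f ⟨1, by omega⟩ ⟨1, by omega⟩,
        f ⟨1, by omega⟩ ⟨0, by omega⟩, f ⟨d-2, by omega⟩ ⟨d-1, by omega⟩, ?_, ?_⟩
      · ext t s
        rcases t with ⟨i, hi⟩; rcases s with ⟨j, hj⟩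
        rw [entryF hd]
        by_cases hij : i = j
        · subst hij
          rw [if_pos rfl, if_neg (by omega : ¬((1:ℕ) = i ∧ 0 = i)),
            if_neg (by omega : ¬(d - 2 = i ∧ d - 1 = i)), add_zero, add_zero]
          exact (hE.diag hd i hi).1
        · rw [if_neg hij]
          by_cases h10 : (1:ℕ) = i ∧ (0:ℕ) = j
          · obtain ⟨e1, e2⟩ := h10; subst e1; subst e2
            rw [if_pos ⟨rfl, rfl⟩, if_neg (by omega : ¬(d - 2 = 1 ∧ d - 1 = 0))]
            simp
          · rw [if_neg h10]
            by_cases hdd : d - 2 = i ∧ d - 1 = j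
            · obtain ⟨e1, e2⟩ := hdd; subst e1; subst e2
              rw [if_pos ⟨rfl, rfl⟩]
              simp
            · rw [if_neg hdd]
              simpa using hE.offdiag hd i j hi hj hij (by omega) (by omega)
      · ext t s
        rcases t with ⟨i, hi⟩; rcases s with ⟨j, hj⟩
        rw [entryG hd]
        by_cases hij : i = j
        · subst hij
          rw [if_pos rfl, if_neg (by omega : ¬((1:ℕ) = i ∧ 0 = i)),
            if_neg (by omega : ¬(d - 2 = i ∧ d - 1 = i)), sub_zero, sub_zero]
          exact (hE.diag hd i hi).2
        · rw [if_neg hij]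
          by_cases h10 : (1:ℕ) = i ∧ (0:ℕ) = j
          · obtain ⟨e1, e2⟩ := h10; subst e1; subst e2
            rw [if_pos ⟨rfl, rfl⟩, if_neg (by omega : ¬(d - 2 = 1 ∧ d - 1 = 0))]
            simpa using hE.sub hd
          · rw [if_neg h10]
            by_cases hdd : d - 2 = i ∧ d - 1 = j
            · obtain ⟨e1, e2⟩ := hdd; subst e1; subst e2
              rw [if_pos ⟨rfl, rfl⟩]
              simpa using hE.sup hd
            · rw [if_neg hdd]
              simpa using hE.symm.offdiag hd i j hi hj hij (by omega) (by omega)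
    · rintro ⟨w, x, y, z, hf, hg⟩ u v
      rw [hf, hg]
      exact backward_dir hd B hB w x y z u v
  refine ⟨hset, ?_⟩
  let φ : (ZMod p × ZMod p × ZMod p × ZMod p) →
      ↥{fg : Matrix (Fin d) (Fin d) (ZMod p) × Matrix (Fin d) (Fin d) (ZMod p) |
        ∃ w x y z : ZMod p,
        fg.1 = Matrix.diagonal (fun i : Fin d => if (i : ℕ) % 2 = 0 then w else x)
          + y • Matrix.single ⟨1, by omega⟩ ⟨0, by omega⟩ 1
          + z • Matrix.single ⟨d - 2, by omega⟩ ⟨d - 1, by omega⟩ 1 ∧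
        fg.2 = Matrix.diagonal (fun i : Fin d => if (i : ℕ) % 2 = 0 then x else w)
          - y • Matrix.single ⟨1, by omega⟩ ⟨0, by omega⟩ 1
          - z • Matrix.single ⟨d - 2, by omega⟩ ⟨d - 1, by omega⟩ 1} :=
    fun q => ⟨(Matrix.diagonal (fun i : Fin d => if (i : ℕ) % 2 = 0 then q.1 else q.2.1)
          + q.2.2.1 • Matrix.single ⟨1, by omega⟩ ⟨0, by omega⟩ 1
          + q.2.2.2 • Matrix.single ⟨d - 2, by omega⟩ ⟨d - 1, by omega⟩ 1,
        Matrix.diagonal (fun i : Fin d => if (i : ℕ) % 2 = 0 then q.2.1 else q.1)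
          - q.2.2.1 • Matrix.single ⟨1, by omega⟩ ⟨0, by omega⟩ 1
          - q.2.2.2 • Matrix.single ⟨d - 2, by omega⟩ ⟨d - 1, by omega⟩ 1),
      ⟨q.1, q.2.1, q.2.2.1, q.2.2.2, rfl, rfl⟩⟩
  have hbij : Function.Bijective φ := by
    constructor
    · rintro ⟨w, x, y, z⟩ ⟨w', x', y', z'⟩ hq
      obtain ⟨e1, e2, e3, e4⟩ := entryF_inj hd (congrArg (fun t => t.val.1) hq)
      simp only [Prod.mk.injEq]
      exact ⟨e1, e2, e3, e4⟩
    · rintro ⟨⟨f, g⟩, hP⟩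
      obtain ⟨w, x, y, z, hf, hg⟩ := hP
      exact ⟨(w, x, y, z), Subtype.ext (Prod.ext hf.symm hg.symm)⟩
  have hc2 : Nat.card (↥{fg : Matrix (Fin d) (Fin d) (ZMod p) × Matrix (Fin d) (Fin d) (ZMod p) |
        ∃ w x y z : ZMod p,
        fg.1 = Matrix.diagonal (fun i : Fin d => if (i : ℕ) % 2 = 0 then w else x)
          + y • Matrix.single ⟨1, by omega⟩ ⟨0, by omega⟩ 1
          + z • Matrix.single ⟨d - 2, by omega⟩ ⟨d - 1, by omega⟩ 1 ∧
        fg.2 = Matrix.diagonal (fun i : Fin d => if (i : ℕ) % 2 = 0 then x else w)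
          - y • Matrix.single ⟨1, by omega⟩ ⟨0, by omega⟩ 1
          - z • Matrix.single ⟨d - 2, by omega⟩ ⟨d - 1, by omega⟩ 1}) = p ^ 4 := by
    rw [← Nat.card_eq_of_bijective φ hbij, Nat.card_prod, Nat.card_prod, Nat.card_prod,
      Nat.card_zmod]
    ring
  calc Nat.card {fg : Matrix (Fin d) (Fin d) (ZMod p) × Matrix (Fin d) (Fin d) (ZMod p) //
        ∀ u v : Fin d → ZMod p, B (u ᵥ* fg.1) v = B u (v ᵥ* fg.2)}
      = Nat.card (↥{fg : Matrix (Fin d) (Fin d) (ZMod p) × Matrix (Fin d) (Fin d) (ZMod p) |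
        ∀ u v : Fin d → ZMod p, B (u ᵥ* fg.1) v = B u (v ᵥ* fg.2)}) := rfl
    _ = p ^ 4 := by rw [hset]; exact hc2
end

section
/- Let p be a prime, d ≥ 4, and let B_D : Z_p^d × Z_p^d → Z_p^{d−1} be the bilinear map with B_D(u, v)_k = u_k v_{k+1} − u_{k+1} v_k for 1 ≤ k ≤ d − 2 and B_D(u, v)_{d−1} = u_{d−2} v_d − u_d v_{d−2}. Then Adj(B_D) = {(D′(v, w) + Q(x, y, z), D′(w, v) − Q(x, y, z)) : v, w, x, y, z ∈ Z_p}, where Q(x, y, z) = x·E_{21} + y·E_{d−2,d−1} + z·E_{d−2,d} and D′(v, w) is the diagonal matrix whose first d − 1 diagonal entries alternate (v, w, v, w, …) starting with v and whose d-th diagonal entry equals its (d−1)-st diagonal entry. In particular Adj(B_D) is a 5-dimensional Z_p-vector space. -/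
open Matrix

namespace AdjD
variable {p d : ℕ}

lemma lt0 (hd : 4 ≤ d) : 0 < d := by omega
lemma lt1 (hd : 4 ≤ d) : 1 < d := by omega
lemma lt3 (hd : 4 ≤ d) : d - 3 < d := by omega
lemma lt2 (hd : 4 ≤ d) : d - 2 < d := by omega
lemma lt1' (hd : 4 ≤ d) : d - 1 < d := by omega
lemma ltk (k : Fin (d - 1)) : (k : ℕ) < d := by have := k.isLt; omega
lemma ltk1 (k : Fin (d - 1)) : (k : ℕ) + 1 < d := by have := k.isLt; omega

lemma vecMul_std (u : Fin d → ZMod p) (i j c : Fin d) (a : ZMod p) :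
    (u ᵥ* single i j a) c = if j = c then u i * a else 0 := by
  classical
  simp only [vecMul, dotProduct, single, of_apply, mul_ite, mul_zero, ite_and]
  by_cases h : j = c
  · simp [h, Finset.sum_ite_eq]
  · simp [h]

def Fm (p d : ℕ) (hd : 4 ≤ d) (v w x y z : ZMod p) : Matrix (Fin d) (Fin d) (ZMod p) :=
  Matrix.diagonal (fun i : Fin d => if (min (i : ℕ) (d - 2)) % 2 = 0 then v else w)
    + (x • Matrix.single ⟨1, lt1 hd⟩ ⟨0, lt0 hd⟩ 1
      + y • Matrix.single ⟨d - 3, lt3 hd⟩ ⟨d - 2, lt2 hd⟩ 1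
      + z • Matrix.single ⟨d - 3, lt3 hd⟩ ⟨d - 1, lt1' hd⟩ 1)

def Gm (p d : ℕ) (hd : 4 ≤ d) (v w x y z : ZMod p) : Matrix (Fin d) (Fin d) (ZMod p) :=
  Matrix.diagonal (fun i : Fin d => if (min (i : ℕ) (d - 2)) % 2 = 0 then w else v)
    - (x • Matrix.single ⟨1, lt1 hd⟩ ⟨0, lt0 hd⟩ 1
      + y • Matrix.single ⟨d - 3, lt3 hd⟩ ⟨d - 2, lt2 hd⟩ 1
      + z • Matrix.single ⟨d - 3, lt3 hd⟩ ⟨d - 1, lt1' hd⟩ 1)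

lemma Fm_apply (hd : 4 ≤ d) (v w x y z : ZMod p) (i c : ℕ) (hi : i < d) (hc : c < d) :
    Fm p d hd v w x y z ⟨i, hi⟩ ⟨c, hc⟩ =
      (if i = c then if (min i (d - 2)) % 2 = 0 then v else w else 0) +
        (((if 1 = i ∧ 0 = c then x else 0) + if d - 3 = i ∧ d - 2 = c then y else 0) +
          if d - 3 = i ∧ d - 1 = c then z else 0) := by
  simp only [Fm, Matrix.add_apply, Matrix.diagonal_apply, Matrix.smul_apply,
    Matrix.single, Matrix.of_apply, smul_eq_mul, mul_ite, mul_one, mul_zero,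
    Fin.mk.injEq]

lemma Gm_apply (hd : 4 ≤ d) (v w x y z : ZMod p) (i c : ℕ) (hi : i < d) (hc : c < d) :
    Gm p d hd v w x y z ⟨i, hi⟩ ⟨c, hc⟩ =
      (if i = c then if (min i (d - 2)) % 2 = 0 then w else v else 0) -
        (((if 1 = i ∧ 0 = c then x else 0) + if d - 3 = i ∧ d - 2 = c then y else 0) +
          if d - 3 = i ∧ d - 1 = c then z else 0) := by
  simp only [Gm, Matrix.sub_apply, Matrix.add_apply, Matrix.diagonal_apply, Matrix.smul_apply,
    Matrix.single, Matrix.of_apply, smul_eq_mul, mul_ite, mul_one, mul_zero,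
    Fin.mk.injEq]

lemma vmF (hd : 4 ≤ d) (v w x y z : ZMod p) (u : Fin d → ZMod p) (c : ℕ) (hc : c < d) :
    (u ᵥ* Fm p d hd v w x y z) ⟨c, hc⟩ =
      u ⟨c, hc⟩ * (if (min c (d - 2)) % 2 = 0 then v else w)
        + (((if 0 = c then u ⟨1, lt1 hd⟩ * x else 0)
          + (if d - 2 = c then u ⟨d - 3, lt3 hd⟩ * y else 0))
          + (if d - 1 = c then u ⟨d - 3, lt3 hd⟩ * z else 0)) := by
  simp only [Fm, vecMul_add, Pi.add_apply, vecMul_diagonal, smul_single,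
    smul_eq_mul, mul_one, vecMul_std, Fin.mk.injEq]

lemma vmG (hd : 4 ≤ d) (v w x y z : ZMod p) (u : Fin d → ZMod p) (c : ℕ) (hc : c < d) :
    (u ᵥ* Gm p d hd v w x y z) ⟨c, hc⟩ =
      u ⟨c, hc⟩ * (if (min c (d - 2)) % 2 = 0 then w else v)
        - (((if 0 = c then u ⟨1, lt1 hd⟩ * x else 0)
          + (if d - 2 = c then u ⟨d - 3, lt3 hd⟩ * y else 0))
          + (if d - 1 = c then u ⟨d - 3, lt3 hd⟩ * z else 0)) := by
  simp only [Gm, vecMul_sub, vecMul_add, Pi.sub_apply, Pi.add_apply, vecMul_diagonal,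
    smul_single, smul_eq_mul, mul_one, vecMul_std, Fin.mk.injEq]


def PE (f g : Matrix (Fin d) (Fin d) (ZMod p)) (a b : Fin d) : Prop :=
  ∀ i j : Fin d,
    f i a * (if b = j then (1 : ZMod p) else 0) - f i b * (if a = j then 1 else 0)
      = (if a = i then (1 : ZMod p) else 0) * g j b - (if b = i then 1 else 0) * g j a

variable {f g : Matrix (Fin d) (Fin d) (ZMod p)} {a b : Fin d}

lemma PE.fza (h : PE f g a b) (hab : a ≠ b) {i : Fin d} (h1 : i ≠ a) (h2 : i ≠ b) :
    f i a = 0 := by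
  have := h i b
  simpa [hab, Ne.symm h1, Ne.symm h2] using this

lemma PE.fzb (h : PE f g a b) (hab : a ≠ b) {i : Fin d} (h1 : i ≠ a) (h2 : i ≠ b) :
    f i b = 0 := by
  have := h i a
  simpa [Ne.symm hab, Ne.symm h1, Ne.symm h2, sub_eq_zero, neg_eq_zero] using this

lemma PE.gza (h : PE f g a b) (hab : a ≠ b) {j : Fin d} (h1 : j ≠ a) (h2 : j ≠ b) :
    g j a = 0 := by
  have := h b j
  simp [hab, Ne.symm hab, Ne.symm h1, Ne.symm h2] at this
  linear_combination this

lemma PE.gzb (h : PE f g a b) (hab : a ≠ b) {j : Fin d} (h1 : j ≠ a) (h2 : j ≠ b) :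
    g j b = 0 := by
  have := h a j
  simp [hab, Ne.symm hab, Ne.symm h1, Ne.symm h2] at this
  linear_combination -this

lemma PE.faa (h : PE f g a b) (hab : a ≠ b) : f a a = g b b := by
  have := h a b
  simpa [hab, Ne.symm hab] using this

lemma PE.fbb (h : PE f g a b) (hab : a ≠ b) : f b b = g a a := by
  have := h b a
  simpa [hab, Ne.symm hab, sub_eq_zero, neg_eq_zero] using this

lemma PE.fba (h : PE f g a b) (hab : a ≠ b) : f b a = -g b a := by
  have := h b b
  simpa [hab, Ne.symm hab, sub_eq_zero] using this

lemma PE.fab (h : PE f g a b) (hab : a ≠ b) : f a b = -g a b := by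
  have := h a a
  simp [hab, Ne.symm hab] at this
  linear_combination -this


lemma pe_of_adj (hd : 4 ≤ d)
    {B : (Fin d → ZMod p) → (Fin d → ZMod p) → (Fin (d - 1) → ZMod p)}
    (hB : ∀ u v : Fin d → ZMod p, ∀ k : Fin (d - 1),
      B u v k =
        if (k : ℕ) < d - 2 then
          u ⟨(k : ℕ), ltk k⟩ * v ⟨(k : ℕ) + 1, ltk1 k⟩
            - u ⟨(k : ℕ) + 1, ltk1 k⟩ * v ⟨(k : ℕ), ltk k⟩
        else
          u ⟨d - 3, lt3 hd⟩ * v ⟨d - 1, lt1' hd⟩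
            - u ⟨d - 1, lt1' hd⟩ * v ⟨d - 3, lt3 hd⟩)
    {f g : Matrix (Fin d) (Fin d) (ZMod p)}
    (h : ∀ u v : Fin d → ZMod p, B (u ᵥ* f) v = B u (v ᵥ* g)) :
    (∀ (a b : ℕ) (ha : a < d) (hb : b < d), b = a + 1 → b ≤ d - 2 →
        PE f g ⟨a, ha⟩ ⟨b, hb⟩) ∧
      (∀ (h3 : d - 3 < d) (h1 : d - 1 < d), PE f g ⟨d - 3, h3⟩ ⟨d - 1, h1⟩) := by
  constructor
  · intro a b ha hb hab hb2
    subst hab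
    intro i j
    have h1 := congrFun (h (Pi.single i 1) (Pi.single j 1)) ⟨a, by omega⟩
    rw [hB, hB] at h1
    simp only [show (((⟨a, by omega⟩ : Fin (d - 1))) : ℕ) = a from rfl] at h1
    rw [if_pos (show a < d - 2 by omega), if_pos (show a < d - 2 by omega)] at h1
    simpa only [single_one_vecMul, Pi.single_apply, Matrix.row_apply] using h1
  · intro h3 h1'
    intro i j
    have h1 := congrFun (h (Pi.single i 1) (Pi.single j 1)) ⟨d - 2, by omega⟩
    rw [hB, hB] at h1
    simp only [show (((⟨d - 2, by omega⟩ : Fin (d - 1))) : ℕ) = d - 2 from rfl] at h1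
    rw [if_neg (show ¬(d - 2 < d - 2) by omega), if_neg (show ¬(d - 2 < d - 2) by omega)] at h1
    simpa only [single_one_vecMul, Pi.single_apply, Matrix.row_apply] using h1


lemma adj_param (hd : 4 ≤ d)
    {B : (Fin d → ZMod p) → (Fin d → ZMod p) → (Fin (d - 1) → ZMod p)}
    (hB : ∀ u v : Fin d → ZMod p, ∀ k : Fin (d - 1),
      B u v k =
        if (k : ℕ) < d - 2 then
          u ⟨(k : ℕ), ltk k⟩ * v ⟨(k : ℕ) + 1, ltk1 k⟩
            - u ⟨(k : ℕ) + 1, ltk1 k⟩ * v ⟨(k : ℕ), ltk k⟩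
        else
          u ⟨d - 3, lt3 hd⟩ * v ⟨d - 1, lt1' hd⟩
            - u ⟨d - 1, lt1' hd⟩ * v ⟨d - 3, lt3 hd⟩)
    (v w x y z : ZMod p) :
    ∀ u u' : Fin d → ZMod p,
      B (u ᵥ* Fm p d hd v w x y z) u' = B u (u' ᵥ* Gm p d hd v w x y z) := by
  intro u u'
  funext k
  obtain ⟨a, ha⟩ := k
  rw [hB, hB]
  simp only [show (((⟨a, ha⟩ : Fin (d - 1))) : ℕ) = a from rfl]
  by_cases hk : a < d - 2
  · rw [if_pos hk, if_pos hk]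
    simp only [vmF, vmG]
    simp only [show min a (d - 2) = a from by omega,
      show min (a + 1) (d - 2) = a + 1 from by omega,
      if_neg (show ¬(d - 2 = a) from by omega), if_neg (show ¬(d - 1 = a) from by omega),
      if_neg (show ¬(0 = a + 1) from by omega), if_neg (show ¬(d - 1 = a + 1) from by omega),
      add_zero, zero_add]
    rcases Nat.eq_zero_or_pos a with h0 | h0
    · subst h0
      have h1 : ¬(d - 2 = 0 + 1) := by omega
      simp only [if_pos rfl, if_neg h1, zero_add, add_zero]
      norm_num
      ring
    · have h0' : ¬((0 : ℕ) = a) := by omega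
      by_cases h1 : d - 2 = a + 1
      · have e : (⟨d - 3, by omega⟩ : Fin d) = ⟨a, by omega⟩ := by
          simp only [Fin.mk.injEq]; omega
        simp only [if_neg h0', if_pos h1, e, add_zero, zero_add]
        by_cases hp : a % 2 = 0
        · simp only [if_pos hp, if_neg (show ¬((a + 1) % 2 = 0) from by omega)]; ring
        · simp only [if_neg hp, if_pos (show (a + 1) % 2 = 0 from by omega)]; ring
      · simp only [if_neg h0', if_neg h1, add_zero, zero_add]
        by_cases hp : a % 2 = 0
        · simp only [if_pos hp, if_neg (show ¬((a + 1) % 2 = 0) from by omega)]; ring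
        · simp only [if_neg hp, if_pos (show (a + 1) % 2 = 0 from by omega)]; ring
  · rw [if_neg hk, if_neg hk]
    simp only [vmF, vmG]
    simp only [if_neg (show ¬((0 : ℕ) = d - 3) from by omega),
      if_neg (show ¬(d - 2 = d - 3) from by omega),
      if_neg (show ¬(d - 1 = d - 3) from by omega),
      if_neg (show ¬((0 : ℕ) = d - 1) from by omega),
      if_neg (show ¬(d - 2 = d - 1) from by omega), if_pos (rfl : d - 1 = d - 1), ite_true,
      show min (d - 3) (d - 2) = d - 3 from by omega,
      show min (d - 1) (d - 2) = d - 2 from by omega,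
      add_zero, zero_add]
    by_cases hp : (d - 3) % 2 = 0
    · simp only [if_pos hp, if_neg (show ¬((d - 2) % 2 = 0) from by omega)]; ring
    · simp only [if_neg hp, if_pos (show (d - 2) % 2 = 0 from by omega)]; ring


set_option maxHeartbeats 1600000 in
lemma forward (hd : 4 ≤ d) {f g : Matrix (Fin d) (Fin d) (ZMod p)}
    (hk : ∀ (a b : ℕ) (ha : a < d) (hb : b < d), b = a + 1 → b ≤ d - 2 →
        PE f g ⟨a, ha⟩ ⟨b, hb⟩)
    (hk' : ∀ (h3 : d - 3 < d) (h1 : d - 1 < d), PE f g ⟨d - 3, h3⟩ ⟨d - 1, h1⟩) :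
    f = Fm p d hd (f ⟨0, lt0 hd⟩ ⟨0, lt0 hd⟩) (f ⟨1, lt1 hd⟩ ⟨1, lt1 hd⟩)
        (f ⟨1, lt1 hd⟩ ⟨0, lt0 hd⟩) (f ⟨d - 3, lt3 hd⟩ ⟨d - 2, lt2 hd⟩)
        (f ⟨d - 3, lt3 hd⟩ ⟨d - 1, lt1' hd⟩) ∧
      g = Gm p d hd (f ⟨0, lt0 hd⟩ ⟨0, lt0 hd⟩) (f ⟨1, lt1 hd⟩ ⟨1, lt1 hd⟩)
        (f ⟨1, lt1 hd⟩ ⟨0, lt0 hd⟩) (f ⟨d - 3, lt3 hd⟩ ⟨d - 2, lt2 hd⟩)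
        (f ⟨d - 3, lt3 hd⟩ ⟨d - 1, lt1' hd⟩) := by
  have hne : ∀ (a b : ℕ) (ha : a < d) (hb : b < d), a ≠ b → (⟨a, ha⟩ : Fin d) ≠ ⟨b, hb⟩ :=
    fun a b ha hb h => by simp only [ne_eq, Fin.mk.injEq]; exact h
  have diag : ∀ m, m ≤ d - 2 → ∀ (hm' : m < d),
      f ⟨m, hm'⟩ ⟨m, hm'⟩ =
        if m % 2 = 0 then f ⟨0, by omega⟩ ⟨0, by omega⟩
        else f ⟨1, by omega⟩ ⟨1, by omega⟩ := by
    intro m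
    induction m using Nat.strong_induction_on with
    | _ m ih =>
      intro hm hm'
      by_cases h0 : m = 0
      · subst h0; simp
      · by_cases h1 : m = 1
        · subst h1; simp
        · have e1 : f ⟨m, hm'⟩ ⟨m, hm'⟩ = g ⟨m - 1, by omega⟩ ⟨m - 1, by omega⟩ :=
            (hk (m - 1) m (by omega) (by omega) (by omega) (by omega)).fbb
              (hne _ _ _ _ (by omega))
          have e2 : f ⟨m - 2, by omega⟩ ⟨m - 2, by omega⟩
              = g ⟨m - 1, by omega⟩ ⟨m - 1, by omega⟩ :=
            (hk (m - 2) (m - 1) (by omega) (by omega) (by omega) (by omega)).faa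
              (hne _ _ _ _ (by omega))
          have e3 := ih (m - 2) (by omega) (by omega) (by omega)
          rw [e1, ← e2, e3, show (m - 2) % 2 = m % 2 from by omega]
  constructor
  · ext ⟨i, hi⟩ ⟨c, hc⟩
    rw [Fm_apply]
    by_cases hic : i = c
    · subst hic
      by_cases hlast : i = d - 1
      · subst hlast
        have e1 : f ⟨d - 1, hi⟩ ⟨d - 1, hc⟩ = g ⟨d - 3, by omega⟩ ⟨d - 3, by omega⟩ :=
          (hk' (by omega) (by omega)).fbb (hne _ _ _ _ (by omega))
        have e2 : f ⟨d - 2, by omega⟩ ⟨d - 2, by omega⟩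
            = g ⟨d - 3, by omega⟩ ⟨d - 3, by omega⟩ :=
          (hk (d - 3) (d - 2) (by omega) (by omega) (by omega) (by omega)).fbb
            (hne _ _ _ _ (by omega))
        rw [e1, ← e2, diag (d - 2) (by omega) (by omega),
          show min (d - 1) (d - 2) = d - 2 from by omega]
        split_ifs <;> first | omega | simp
      · rw [diag i (by omega) hi, show min i (d - 2) = i from by omega]
        split_ifs <;> first | omega | (simp_all; done) | simp
    · by_cases hx : i = 1 ∧ c = 0
      · obtain ⟨h1, h2⟩ := hx; subst h1; subst h2
        split_ifs <;> first | omega | (simp_all; done) | simp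
      · by_cases hy : i = d - 3 ∧ c = d - 2
        · obtain ⟨h1, h2⟩ := hy; subst h1; subst h2
          split_ifs <;> first | omega | (simp_all; done) | simp
        · by_cases hz : i = d - 3 ∧ c = d - 1
          · obtain ⟨h1, h2⟩ := hz; subst h1; subst h2
            split_ifs <;> first | omega | (simp_all; done) | simp
          · have hzero : f ⟨i, hi⟩ ⟨c, hc⟩ = 0 := by
              by_cases hc0 : c = 0
              · subst hc0
                exact (hk 0 1 (by omega) (by omega) rfl (by omega)).fza
                  (hne _ _ _ _ (by omega)) (hne _ _ _ _ (by omega)) (hne _ _ _ _ (by omega))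
              · by_cases hcl : c = d - 1
                · subst hcl
                  exact (hk' (by omega) (by omega)).fzb
                    (hne _ _ _ _ (by omega)) (hne _ _ _ _ (by omega)) (hne _ _ _ _ (by omega))
                · by_cases hcd2 : c = d - 2
                  · subst hcd2
                    exact (hk (d - 3) (d - 2) (by omega) (by omega) (by omega) (by omega)).fzb
                      (hne _ _ _ _ (by omega)) (hne _ _ _ _ (by omega)) (hne _ _ _ _ (by omega))
                  · by_cases hprev : i = c - 1
                    · subst hprev
                      exact (hk c (c + 1) (by omega) (by omega) rfl (by omega)).fza
                        (hne _ _ _ _ (by omega)) (hne _ _ _ _ (by omega))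
                        (hne _ _ _ _ (by omega))
                    · exact (hk (c - 1) c (by omega) (by omega) (by omega) (by omega)).fzb
                        (hne _ _ _ _ (by omega)) (hne _ _ _ _ (by omega))
                        (hne _ _ _ _ (by omega))
            rw [hzero]
            split_ifs <;> first | omega | (simp_all; done) | simp
  · ext ⟨i, hi⟩ ⟨c, hc⟩
    rw [Gm_apply]
    by_cases hic : i = c
    · subst hic
      by_cases h0 : i = 0
      · subst h0
        have e1 : f ⟨1, by omega⟩ ⟨1, by omega⟩ = g ⟨0, hi⟩ ⟨0, hc⟩ :=
          (hk 0 1 (by omega) (by omega) rfl (by omega)).fbb (hne _ _ _ _ (by omega))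
        rw [← e1, show min 0 (d - 2) = 0 from by omega]
        split_ifs <;> first | omega | (simp_all; done) | simp
      · by_cases hlast : i = d - 1
        · subst hlast
          have e1 : f ⟨d - 3, by omega⟩ ⟨d - 3, by omega⟩ = g ⟨d - 1, hi⟩ ⟨d - 1, hc⟩ :=
            (hk' (by omega) (by omega)).faa (hne _ _ _ _ (by omega))
          rw [← e1, diag (d - 3) (by omega) (by omega),
            show min (d - 1) (d - 2) = d - 2 from by omega]
          split_ifs <;> first | omega | simp
        · by_cases hd2 : i = d - 2
          · subst hd2
            have e1 : f ⟨d - 3, by omega⟩ ⟨d - 3, by omega⟩ = g ⟨d - 2, hi⟩ ⟨d - 2, hc⟩ :=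
              (hk (d - 3) (d - 2) (by omega) (by omega) (by omega) (by omega)).faa
                (hne _ _ _ _ (by omega))
            rw [← e1, diag (d - 3) (by omega) (by omega),
              show min (d - 2) (d - 2) = d - 2 from by omega]
            split_ifs <;> first | omega | (simp_all; done) | simp
          · have e1 : f ⟨i + 1, by omega⟩ ⟨i + 1, by omega⟩ = g ⟨i, hi⟩ ⟨i, hc⟩ :=
              (hk i (i + 1) (by omega) (by omega) rfl (by omega)).fbb
                (hne _ _ _ _ (by omega))
            rw [← e1, diag (i + 1) (by omega) (by omega),
              show min i (d - 2) = i from by omega]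
            split_ifs <;> first | omega | (simp_all; done) | simp
    · by_cases hx : i = 1 ∧ c = 0
      · obtain ⟨h1, h2⟩ := hx; subst h1; subst h2
        have e1 : f ⟨1, hi⟩ ⟨0, hc⟩ = -g ⟨1, hi⟩ ⟨0, hc⟩ :=
          (hk 0 1 (by omega) (by omega) rfl (by omega)).fba (hne _ _ _ _ (by omega))
        have e2 : g ⟨1, hi⟩ ⟨0, hc⟩ = -f ⟨1, hi⟩ ⟨0, hc⟩ := by linear_combination e1
        rw [e2]
        split_ifs <;> first | omega | (simp_all; done) | simp
      · by_cases hy : i = d - 3 ∧ c = d - 2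
        · obtain ⟨h1, h2⟩ := hy; subst h1; subst h2
          have e1 : f ⟨d - 3, hi⟩ ⟨d - 2, hc⟩ = -g ⟨d - 3, hi⟩ ⟨d - 2, hc⟩ :=
            (hk (d - 3) (d - 2) (by omega) (by omega) (by omega) (by omega)).fab
              (hne _ _ _ _ (by omega))
          have e2 : g ⟨d - 3, hi⟩ ⟨d - 2, hc⟩ = -f ⟨d - 3, hi⟩ ⟨d - 2, hc⟩ := by
            linear_combination e1
          rw [e2]
          split_ifs <;> first | omega | (simp_all; done) | simp
        · by_cases hz : i = d - 3 ∧ c = d - 1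
          · obtain ⟨h1, h2⟩ := hz; subst h1; subst h2
            have e1 : f ⟨d - 3, hi⟩ ⟨d - 1, hc⟩ = -g ⟨d - 3, hi⟩ ⟨d - 1, hc⟩ :=
              (hk' (by omega) (by omega)).fab (hne _ _ _ _ (by omega))
            have e2 : g ⟨d - 3, hi⟩ ⟨d - 1, hc⟩ = -f ⟨d - 3, hi⟩ ⟨d - 1, hc⟩ := by
              linear_combination e1
            rw [e2]
            split_ifs <;> first | omega | (simp_all; done) | simp
          · have hzero : g ⟨i, hi⟩ ⟨c, hc⟩ = 0 := by
              by_cases hc0 : c = 0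
              · subst hc0
                exact (hk 0 1 (by omega) (by omega) rfl (by omega)).gza
                  (hne _ _ _ _ (by omega)) (hne _ _ _ _ (by omega)) (hne _ _ _ _ (by omega))
              · by_cases hcl : c = d - 1
                · subst hcl
                  exact (hk' (by omega) (by omega)).gzb
                    (hne _ _ _ _ (by omega)) (hne _ _ _ _ (by omega)) (hne _ _ _ _ (by omega))
                · by_cases hcd2 : c = d - 2
                  · subst hcd2
                    exact (hk (d - 3) (d - 2) (by omega) (by omega) (by omega) (by omega)).gzb
                      (hne _ _ _ _ (by omega)) (hne _ _ _ _ (by omega)) (hne _ _ _ _ (by omega))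
                  · by_cases hprev : i = c - 1
                    · subst hprev
                      exact (hk c (c + 1) (by omega) (by omega) rfl (by omega)).gza
                        (hne _ _ _ _ (by omega)) (hne _ _ _ _ (by omega))
                        (hne _ _ _ _ (by omega))
                    · exact (hk (c - 1) c (by omega) (by omega) (by omega) (by omega)).gzb
                        (hne _ _ _ _ (by omega)) (hne _ _ _ _ (by omega))
                        (hne _ _ _ _ (by omega))
            rw [hzero]
            split_ifs <;> first | omega | (simp_all; done) | simp


lemma Fm00 (hd : 4 ≤ d) (v w x y z : ZMod p) (h h' : 0 < d) :
    Fm p d hd v w x y z ⟨0, h⟩ ⟨0, h'⟩ = v := by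
  rw [Fm_apply]; split_ifs <;> first | omega | (simp_all; done) | simp

lemma Fm11 (hd : 4 ≤ d) (v w x y z : ZMod p) (h h' : 1 < d) :
    Fm p d hd v w x y z ⟨1, h⟩ ⟨1, h'⟩ = w := by
  rw [Fm_apply]; split_ifs <;> first | omega | (simp_all; done) | simp

lemma Fm10 (hd : 4 ≤ d) (v w x y z : ZMod p) (h : 1 < d) (h' : 0 < d) :
    Fm p d hd v w x y z ⟨1, h⟩ ⟨0, h'⟩ = x := by
  rw [Fm_apply]; split_ifs <;> first | omega | (simp_all; done) | simp

lemma Fmy (hd : 4 ≤ d) (v w x y z : ZMod p) (h : d - 3 < d) (h' : d - 2 < d) :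
    Fm p d hd v w x y z ⟨d - 3, h⟩ ⟨d - 2, h'⟩ = y := by
  rw [Fm_apply]; split_ifs <;> first | omega | (simp_all; done) | simp

lemma Fmz (hd : 4 ≤ d) (v w x y z : ZMod p) (h : d - 3 < d) (h' : d - 1 < d) :
    Fm p d hd v w x y z ⟨d - 3, h⟩ ⟨d - 1, h'⟩ = z := by
  rw [Fm_apply]; split_ifs <;> first | omega | (simp_all; done) | simp

end AdjD

/-- Let `p` be a prime, `d ≥ 4`, and let `B_D` be the type-`D`
bilinear map `ℤₚᵈ × ℤₚᵈ → ℤₚ^{d−1}` given by `B_D(u,v)_k = u_k v_{k+1} − u_{k+1} v_k` for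
`1 ≤ k ≤ d−2` and `B_D(u,v)_{d−1} = u_{d−2} v_d − u_d v_{d−2}` (the paper's indices are
`1`-based; here they are `0`-based).  Then `Adj(B_D)` consists exactly of the pairs
`(D′(v,w) + Q(x,y,z), D′(w,v) − Q(x,y,z))` with `v, w, x, y, z ∈ ℤₚ`, where
`Q(x,y,z) = x·E_{21} + y·E_{d−2,d−1} + z·E_{d−2,d}` and `D′(v,w)` is the diagonal matrix
whose first `d−1` diagonal entries alternate `(v,w,v,w,…)` starting with `v` and whose
`d`-th diagonal entry equals its `(d−1)`-st one.  In particular `Adj(B_D)` has exactly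
`p⁵` elements, i.e. it is `5`-dimensional over `ℤₚ`. -/
theorem adjoint_ring_typeD (p d : ℕ) [Fact p.Prime] (hd : 4 ≤ d)
    (B : (Fin d → ZMod p) → (Fin d → ZMod p) → (Fin (d - 1) → ZMod p))
    (hB : ∀ u v : Fin d → ZMod p, ∀ k : Fin (d - 1),
      B u v k =
        if (k : ℕ) < d - 2 then
          u ⟨(k : ℕ), by have := k.isLt; omega⟩ * v ⟨(k : ℕ) + 1, by have := k.isLt; omega⟩
            - u ⟨(k : ℕ) + 1, by have := k.isLt; omega⟩ * v ⟨(k : ℕ), by have := k.isLt; omega⟩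
        else
          u ⟨d - 3, by omega⟩ * v ⟨d - 1, by omega⟩
            - u ⟨d - 1, by omega⟩ * v ⟨d - 3, by omega⟩) :
    {fg : Matrix (Fin d) (Fin d) (ZMod p) × Matrix (Fin d) (Fin d) (ZMod p) |
        ∀ u v : Fin d → ZMod p, B (u ᵥ* fg.1) v = B u (v ᵥ* fg.2)} =
      {fg | ∃ v w x y z : ZMod p,
        fg.1 = Matrix.diagonal
            (fun i : Fin d => if (min (i : ℕ) (d - 2)) % 2 = 0 then v else w)
          + (x • Matrix.single ⟨1, by omega⟩ ⟨0, by omega⟩ 1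
            + y • Matrix.single ⟨d - 3, by omega⟩ ⟨d - 2, by omega⟩ 1
            + z • Matrix.single ⟨d - 3, by omega⟩ ⟨d - 1, by omega⟩ 1) ∧
        fg.2 = Matrix.diagonal
            (fun i : Fin d => if (min (i : ℕ) (d - 2)) % 2 = 0 then w else v)
          - (x • Matrix.single ⟨1, by omega⟩ ⟨0, by omega⟩ 1
            + y • Matrix.single ⟨d - 3, by omega⟩ ⟨d - 2, by omega⟩ 1
            + z • Matrix.single ⟨d - 3, by omega⟩ ⟨d - 1, by omega⟩ 1)} ∧
    Nat.card {fg : Matrix (Fin d) (Fin d) (ZMod p) × Matrix (Fin d) (Fin d) (ZMod p) //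
        ∀ u v : Fin d → ZMod p, B (u ᵥ* fg.1) v = B u (v ᵥ* fg.2)} = p ^ 5 := by
  constructor
  · ext fg
    constructor
    · intro hfg
      obtain ⟨hk, hk'⟩ := AdjD.pe_of_adj hd hB hfg
      obtain ⟨hf, hg⟩ := AdjD.forward hd hk hk'
      exact ⟨_, _, _, _, _, hf, hg⟩
    · rintro ⟨v, w, x, y, z, hf, hg⟩
      intro u u'
      have h := AdjD.adj_param hd hB v w x y z u u'
      rw [show fg.1 = AdjD.Fm p d hd v w x y z from hf,
        show fg.2 = AdjD.Gm p d hd v w x y z from hg]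
      exact h
  · have e : {fg : Matrix (Fin d) (Fin d) (ZMod p) × Matrix (Fin d) (Fin d) (ZMod p) //
        ∀ u v : Fin d → ZMod p, B (u ᵥ* fg.1) v = B u (v ᵥ* fg.2)} ≃
        (ZMod p × ZMod p × ZMod p × ZMod p × ZMod p) :=
      { toFun := fun s => (s.1.1 ⟨0, by omega⟩ ⟨0, by omega⟩, s.1.1 ⟨1, by omega⟩ ⟨1, by omega⟩,
          s.1.1 ⟨1, by omega⟩ ⟨0, by omega⟩, s.1.1 ⟨d - 3, by omega⟩ ⟨d - 2, by omega⟩,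
          s.1.1 ⟨d - 3, by omega⟩ ⟨d - 1, by omega⟩)
        invFun := fun q => ⟨(AdjD.Fm p d hd q.1 q.2.1 q.2.2.1 q.2.2.2.1 q.2.2.2.2,
          AdjD.Gm p d hd q.1 q.2.1 q.2.2.1 q.2.2.2.1 q.2.2.2.2),
          AdjD.adj_param hd hB _ _ _ _ _⟩
        left_inv := fun s => by
          obtain ⟨hk, hk'⟩ := AdjD.pe_of_adj hd hB s.2
          obtain ⟨hf, hg⟩ := AdjD.forward hd hk hk'
          exact Subtype.ext (Prod.ext hf.symm hg.symm)
        right_inv := fun q => by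
          obtain ⟨v, w, x, y, z⟩ := q
          simp only [AdjD.Fm00, AdjD.Fm11, AdjD.Fm10, AdjD.Fmy, AdjD.Fmz] }
    rw [Nat.card_congr e]
    simp only [Nat.card_prod, Nat.card_zmod]
    ring
end
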